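/- arXiv:math/9905022 — 7 statements merged into one kernel-verified Lean document; each statement's English description precedes it below -/
import Mathlib

section
/- If 0 belongs to the interior of the convex hull of Δ, then the topological interior of Λ equals {x ∈ Λ : ∃ε > 0 such that x ∈ int_εΛ}, i.e. int Λ = ⋃_{ε>0} int_εΛ. -/
/-- If 0 belongs to the interior of the convex hull of Δ, then the
topological interior of the convex set Λ equals the union over ε > 0 of the
ε-interiors `int_εΛ = {x ∈ Λ : ∀ δ ∈ Δ, x + εδ ∈ Λ}`. -/
theorem interior_eq_union_eps_interior (d : ℕ) (hd : 1 ≤ d)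
    (Λ : Set (EuclideanSpace ℝ (Fin d))) (hΛ : Convex ℝ Λ)
    (Δ : Finset (EuclideanSpace ℝ (Fin d))) (hΔ : Δ.Nonempty)
    (h0 : (0 : EuclideanSpace ℝ (Fin d)) ∈
      interior (convexHull ℝ (Δ : Set (EuclideanSpace ℝ (Fin d))))) :
    interior Λ = {x ∈ Λ | ∃ ε > (0 : ℝ), ∀ δ ∈ Δ, x + ε • δ ∈ Λ} := by
  have _hd := hd
  ext x
  constructor
  · intro hx
    have hxΛ : x ∈ Λ := interior_subset hx
    obtain ⟨r, hr, hball⟩ := Metric.mem_nhds_iff.1 (mem_interior_iff_mem_nhds.1 hx)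
    set M : ℝ := Δ.sup' hΔ fun δ => ‖δ‖ with hM
    have hM0 : 0 ≤ M := by
      obtain ⟨δ₀, hδ₀⟩ := hΔ
      exact le_trans (norm_nonneg δ₀) (Finset.le_sup' _ hδ₀)
    refine ⟨hxΛ, r / (2 * (M + 1)), by positivity, fun δ hδ => ?_⟩
    apply hball
    simp only [Metric.mem_ball, dist_eq_norm]
    have h1 : ‖x + (r / (2 * (M + 1))) • δ - x‖ = r / (2 * (M + 1)) * ‖δ‖ := by
      rw [add_sub_cancel_left, norm_smul, Real.norm_eq_abs,
        abs_of_pos (by positivity)]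
    rw [h1]
    have hδM : ‖δ‖ ≤ M := Finset.le_sup' _ hδ
    calc r / (2 * (M + 1)) * ‖δ‖ ≤ r / (2 * (M + 1)) * (M + 1) := by
          apply mul_le_mul_of_nonneg_left (hδM.trans (by linarith)) (by positivity)
      _ = r / 2 := by field_simp
      _ < r := by linarith
  · rintro ⟨hxΛ, ε, hε, hx⟩
    -- homeomorphism y ↦ x + ε • y
    let H : EuclideanSpace ℝ (Fin d) ≃ₜ EuclideanSpace ℝ (Fin d) := (Homeomorph.smulOfNeZero ε (ne_of_gt hε)).trans
      (Homeomorph.addLeft x)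
    have hHy : ∀ y : EuclideanSpace ℝ (Fin d), H y = x + ε • y := fun y => rfl
    -- H '' convexHull Δ ⊆ Λ
    have himg : H '' (convexHull ℝ (Δ : Set (EuclideanSpace ℝ (Fin d)))) ⊆ Λ := by
      have : H '' (convexHull ℝ (Δ : Set (EuclideanSpace ℝ (Fin d)))) ⊆ convexHull ℝ (H '' (Δ : Set (EuclideanSpace ℝ (Fin d)))) := by
        have haff : ∀ s : Set (EuclideanSpace ℝ (Fin d)), H '' (convexHull ℝ s) ⊆ convexHull ℝ (H '' s) := by
          intro s
          let φ : EuclideanSpace ℝ (Fin d) →ᵃ[ℝ] EuclideanSpace ℝ (Fin d) :=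
            (AffineMap.const ℝ (EuclideanSpace ℝ (Fin d)) x) + ε • (AffineMap.id ℝ (EuclideanSpace ℝ (Fin d)))
          have hφ : ∀ y, φ y = x + ε • y := fun y => rfl
          have : H '' (convexHull ℝ s) = φ '' (convexHull ℝ s) := by
            apply Set.image_congr fun y _ => rfl
          rw [this, AffineMap.image_convexHull]
          apply convexHull_mono
          intro z hz
          obtain ⟨y, hy, rfl⟩ := hz
          exact ⟨y, hy, rfl⟩
        exact haff _
      refine this.trans (convexHull_min ?_ hΛ)
      rintro z ⟨δ, hδ, rfl⟩
      exact hx δ hδ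
    have : x ∈ interior (H '' (convexHull ℝ (Δ : Set (EuclideanSpace ℝ (Fin d))))) := by
      rw [← H.image_interior]
      exact ⟨0, h0, by simp [hHy]⟩
    exact interior_mono himg this
end

section
/- If the affine hull of the support S equals all of ℝ^d, then Φ is strictly convex on ℝ^d: for all v ≠ v′ in ℝ^d and all 0 < λ < 1, Φ(λv + (1−λ)v′) < λΦ(v) + (1−λ)Φ(v′). -/
open scoped RealInnerProductSpace

/-- Strict weighted AM-GM for two positive reals. -/
lemma strict_amgm2 {a b p q : ℝ} (ha : 0 < a) (hb : 0 < b) (hab : a + b = 1)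
    (hp : 0 < p) (hq : 0 < q) (hne : p ≠ q) : p ^ a * q ^ b < a * p + b * q := by
  have hlog := strictConcaveOn_log_Ioi.2 (Set.mem_Ioi.2 hp) (Set.mem_Ioi.2 hq) hne ha hb hab
  have h1 : p ^ a * q ^ b = Real.exp (a * Real.log p + b * Real.log q) := by
    rw [Real.exp_add, Real.rpow_def_of_pos hp, Real.rpow_def_of_pos hq,
      mul_comm (Real.log p), mul_comm (Real.log q)]
  have h2 : a * p + b * q = Real.exp (Real.log (a * p + b * q)) := by
    rw [Real.exp_log (by positivity)]
  rw [h1, h2]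
  exact Real.exp_lt_exp.2 (by simpa [smul_eq_mul] using hlog)

/-- If a linear functional `⟪u, ·⟫` is constant on a set whose affine span is everything,
then `u = 0`. -/
lemma inner_const_of_affineSpan_top {d : ℕ} {S : Set (EuclideanSpace ℝ (Fin d))}
    (hS : affineSpan ℝ S = ⊤) {u : EuclideanSpace ℝ (Fin d)} {c : ℝ}
    (h : ∀ δ ∈ S, ⟪u, δ⟫ = c) : u = 0 := by
  have hvs : vectorSpan ℝ S = ⊤ := by
    rw [← direction_affineSpan, hS, AffineSubspace.direction_top]
  have hz : ∀ z ∈ vectorSpan ℝ S, ⟪u, z⟫ = 0 := by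
    intro z hz
    induction hz using Submodule.span_induction with
    | mem x hx =>
        obtain ⟨p, hp, q, hq, rfl⟩ := hx
        show ⟪u, p - q⟫ = 0
        rw [inner_sub_right, h p hp, h q hq, sub_self]
    | zero => simp
    | add x y _ _ hx hy => rw [inner_add_right, hx, hy, add_zero]
    | smul r x _ hx => rw [real_inner_smul_right, hx, mul_zero]
  have : ⟪u, u⟫ = 0 := hz u (hvs ▸ Submodule.mem_top)
  exact inner_self_eq_zero.1 this

/-- The logarithmic moment generating function Φ(v) = log Σ_{δ∈Δ} w(δ) e^{⟨v,δ⟩}. -/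
noncomputable def logMGF {d : ℕ} (Δ : Finset (EuclideanSpace ℝ (Fin d)))
    (w : EuclideanSpace ℝ (Fin d) → ℝ) (v : EuclideanSpace ℝ (Fin d)) : ℝ :=
  Real.log (∑ δ ∈ Δ, w δ * Real.exp ⟪v, δ⟫)

/-- If the affine hull of the support S = {δ ∈ Δ : w(δ) > 0} equals all
of ℝ^d, then Φ is strictly convex on ℝ^d. -/
theorem logMGF_strictConvexOn (d : ℕ) (hd : 1 ≤ d)
    (Δ : Finset (EuclideanSpace ℝ (Fin d))) (hΔ : Δ.Nonempty)
    (w : EuclideanSpace ℝ (Fin d) → ℝ) (hw : ∀ δ ∈ Δ, 0 ≤ w δ)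
    (hwpos : 0 < ∑ δ ∈ Δ, w δ)
    (haff : affineSpan ℝ {δ : EuclideanSpace ℝ (Fin d) | δ ∈ Δ ∧ 0 < w δ} = ⊤) :
    StrictConvexOn ℝ Set.univ (logMGF Δ w) := by
  obtain ⟨δ₁, hδ₁, hwδ₁⟩ : ∃ δ ∈ Δ, 0 < w δ := by
    by_contra hc; push_neg at hc
    exact absurd (Finset.sum_nonpos fun δ hδ => hc δ hδ) (not_le.2 hwpos)
  have hZpos : ∀ v : EuclideanSpace ℝ (Fin d), 0 < ∑ δ ∈ Δ, w δ * Real.exp ⟪v, δ⟫ :=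
    fun v => Finset.sum_pos' (fun δ hδ => mul_nonneg (hw δ hδ) (Real.exp_pos _).le)
      ⟨δ₁, hδ₁, mul_pos hwδ₁ (Real.exp_pos _)⟩
  refine ⟨convex_univ, fun x _ y _ hxy a b ha hb hab => ?_⟩
  set Zx := ∑ δ ∈ Δ, w δ * Real.exp ⟪x, δ⟫ with hZx
  set Zy := ∑ δ ∈ Δ, w δ * Real.exp ⟪y, δ⟫ with hZy
  have hZxpos : 0 < Zx := hZpos x
  have hZypos : 0 < Zy := hZpos y
  set F : EuclideanSpace ℝ (Fin d) → ℝ := fun δ => w δ * Real.exp ⟪x, δ⟫ / Zx with hF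
  set G : EuclideanSpace ℝ (Fin d) → ℝ := fun δ => w δ * Real.exp ⟪y, δ⟫ / Zy with hG
  have hFnn : ∀ δ ∈ Δ, 0 ≤ F δ := fun δ hδ =>
    div_nonneg (mul_nonneg (hw δ hδ) (Real.exp_pos _).le) hZxpos.le
  have hGnn : ∀ δ ∈ Δ, 0 ≤ G δ := fun δ hδ =>
    div_nonneg (mul_nonneg (hw δ hδ) (Real.exp_pos _).le) hZypos.le
  have hFsum : ∑ δ ∈ Δ, F δ = 1 := by
    simp only [hF, ← Finset.sum_div]; exact div_self hZxpos.ne'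
  have hGsum : ∑ δ ∈ Δ, G δ = 1 := by
    simp only [hG, ← Finset.sum_div]; exact div_self hZypos.ne'
  -- strictness witness
  obtain ⟨δ₀, hδ₀, hwδ₀, hne₀⟩ : ∃ δ ∈ Δ, 0 < w δ ∧ F δ ≠ G δ := by
    by_contra hc; push_neg at hc
    have hconst : ∀ δ ∈ {δ : EuclideanSpace ℝ (Fin d) | δ ∈ Δ ∧ 0 < w δ},
        ⟪x - y, δ⟫ = Real.log Zx - Real.log Zy := by
      rintro δ ⟨hδ, hwδ⟩
      have h3 : w δ * (Real.exp ⟪x, δ⟫ / Zx) = w δ * (Real.exp ⟪y, δ⟫ / Zy) := by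
        rw [← mul_div_assoc, ← mul_div_assoc]; exact hc δ hδ hwδ
      have h2 := mul_left_cancel₀ hwδ.ne' h3
      have h4 := congrArg Real.log h2
      rw [Real.log_div (Real.exp_ne_zero _) hZxpos.ne',
        Real.log_div (Real.exp_ne_zero _) hZypos.ne', Real.log_exp, Real.log_exp] at h4
      rw [inner_sub_left]; linarith
    have := inner_const_of_affineSpan_top haff hconst
    exact hxy (sub_eq_zero.1 this)
  -- termwise identity
  have key : ∀ δ ∈ Δ, w δ * Real.exp ⟪a • x + b • y, δ⟫
      = (Zx ^ a * Zy ^ b) * (F δ ^ a * G δ ^ b) := by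
    intro δ hδ
    have hwδ := hw δ hδ
    have e1 : F δ ^ a = w δ ^ a * Real.exp (⟪x, δ⟫ * a) / Zx ^ a := by
      simp only [hF]
      rw [Real.div_rpow (mul_nonneg hwδ (Real.exp_pos _).le) hZxpos.le,
        Real.mul_rpow hwδ (Real.exp_pos _).le, ← Real.exp_mul]
    have e2 : G δ ^ b = w δ ^ b * Real.exp (⟪y, δ⟫ * b) / Zy ^ b := by
      simp only [hG]
      rw [Real.div_rpow (mul_nonneg hwδ (Real.exp_pos _).le) hZypos.le,
        Real.mul_rpow hwδ (Real.exp_pos _).le, ← Real.exp_mul]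
    have e3 : w δ ^ a * w δ ^ b = w δ := by
      rw [← Real.rpow_add' hwδ (by rw [hab]; norm_num), hab, Real.rpow_one]
    have e4 : ⟪a • x + b • y, δ⟫ = ⟪x, δ⟫ * a + ⟪y, δ⟫ * b := by
      rw [inner_add_left, real_inner_smul_left, real_inner_smul_left]; ring
    rw [e1, e2, e4, Real.exp_add]
    have hZxa : (0:ℝ) < Zx ^ a := Real.rpow_pos_of_pos hZxpos a
    have hZyb : (0:ℝ) < Zy ^ b := Real.rpow_pos_of_pos hZypos b
    conv_lhs => rw [← e3]
    field_simp
  -- strict sum inequality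
  have hBs : ∀ δ ∈ Δ, F δ ^ a * G δ ^ b ≤ a * F δ + b * G δ := fun δ hδ =>
    Real.geom_mean_le_arith_mean2_weighted ha.le hb.le (hFnn δ hδ) (hGnn δ hδ) hab
  have hF₀ : 0 < F δ₀ := div_pos (mul_pos hwδ₀ (Real.exp_pos _)) hZxpos
  have hG₀ : 0 < G δ₀ := div_pos (mul_pos hwδ₀ (Real.exp_pos _)) hZypos
  have hstrict : F δ₀ ^ a * G δ₀ ^ b < a * F δ₀ + b * G δ₀ :=
    strict_amgm2 ha hb hab hF₀ hG₀ hne₀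
  have hsumlt : ∑ δ ∈ Δ, F δ ^ a * G δ ^ b < 1 := by
    calc ∑ δ ∈ Δ, F δ ^ a * G δ ^ b < ∑ δ ∈ Δ, (a * F δ + b * G δ) :=
          Finset.sum_lt_sum hBs ⟨δ₀, hδ₀, hstrict⟩
      _ = 1 := by
          rw [Finset.sum_add_distrib, ← Finset.mul_sum, ← Finset.mul_sum, hFsum, hGsum]
          linarith
  have hmain : ∑ δ ∈ Δ, w δ * Real.exp ⟪a • x + b • y, δ⟫ < Zx ^ a * Zy ^ b := by
    calc ∑ δ ∈ Δ, w δ * Real.exp ⟪a • x + b • y, δ⟫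
        = ∑ δ ∈ Δ, (Zx ^ a * Zy ^ b) * (F δ ^ a * G δ ^ b) := Finset.sum_congr rfl key
      _ = (Zx ^ a * Zy ^ b) * ∑ δ ∈ Δ, F δ ^ a * G δ ^ b := by rw [Finset.mul_sum]
      _ < (Zx ^ a * Zy ^ b) * 1 := by
          exact mul_lt_mul_of_pos_left hsumlt
            (mul_pos (Real.rpow_pos_of_pos hZxpos a) (Real.rpow_pos_of_pos hZypos b))
      _ = Zx ^ a * Zy ^ b := mul_one _
  have hlog := Real.log_lt_log (hZpos (a • x + b • y)) hmain
  rw [Real.log_mul (Real.rpow_pos_of_pos hZxpos a).ne' (Real.rpow_pos_of_pos hZypos b).ne',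
    Real.log_rpow hZxpos, Real.log_rpow hZypos] at hlog
  simpa [logMGF, smul_eq_mul, hZx, hZy] using hlog
end

section
/- The effective domain of the Legendre–Fenchel transform Φ* equals the convex hull of the support of the weights: for every x ∈ ℝ^d, Φ*(x) < ∞ if and only if x ∈ conv S. In particular, if w(δ) > 0 for every δ ∈ Δ, then {x : Φ*(x) < ∞} = conv Δ. -/
open scoped RealInnerProductSpace

/-- The Legendre–Fenchel transform Φ*(x) = sup_{v∈ℝ^d} (⟨v,x⟩ − Φ(v)), valued in
(−∞,∞]. -/
noncomputable def logMGFStar {d : ℕ} (Δ : Finset (EuclideanSpace ℝ (Fin d)))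
    (w : EuclideanSpace ℝ (Fin d) → ℝ) (x : EuclideanSpace ℝ (Fin d)) : EReal :=
  ⨆ v : EuclideanSpace ℝ (Fin d), ((⟪v, x⟫ - logMGF Δ w v : ℝ) : EReal)

/-- The effective domain of Φ* equals the convex hull of the support of
the weights: Φ*(x) < ∞ iff x ∈ conv S, where S = {δ ∈ Δ : w(δ) > 0}.  In particular,
if all weights are positive then {x : Φ*(x) < ∞} = conv Δ. -/
theorem logMGFStar_domain (d : ℕ) (hd : 1 ≤ d)
    (Δ : Finset (EuclideanSpace ℝ (Fin d))) (hΔ : Δ.Nonempty)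
    (w : EuclideanSpace ℝ (Fin d) → ℝ) (hw : ∀ δ ∈ Δ, 0 ≤ w δ)
    (hwpos : 0 < ∑ δ ∈ Δ, w δ) :
    (∀ x, logMGFStar Δ w x < ⊤ ↔
        x ∈ convexHull ℝ {δ : EuclideanSpace ℝ (Fin d) | δ ∈ Δ ∧ 0 < w δ}) ∧
      ((∀ δ ∈ Δ, 0 < w δ) →
        {x | logMGFStar Δ w x < ⊤} =
          convexHull ℝ (Δ : Set (EuclideanSpace ℝ (Fin d)))) := by
  classical
  set S : Finset (EuclideanSpace ℝ (Fin d)) := Δ.filter (fun δ => 0 < w δ) with hSdef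
  have hSsub : S ⊆ Δ := Finset.filter_subset _ _
  have hSset : {δ : EuclideanSpace ℝ (Fin d) | δ ∈ Δ ∧ 0 < w δ}
      = (S : Set (EuclideanSpace ℝ (Fin d))) := by
    ext δ; simp [hSdef]
  have hSne : S.Nonempty := by
    by_contra h
    rw [Finset.not_nonempty_iff_eq_empty] at h
    have : ∑ δ ∈ Δ, w δ = 0 := by
      apply Finset.sum_eq_zero
      intro δ hδ
      by_contra hne
      have : δ ∈ S := Finset.mem_filter.mpr ⟨hδ, lt_of_le_of_ne (hw δ hδ) (Ne.symm hne)⟩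
      simp [h] at this
    linarith
  -- the exponential sum is positive
  have hpos : ∀ v : EuclideanSpace ℝ (Fin d),
      0 < ∑ δ ∈ Δ, w δ * Real.exp ⟪v, δ⟫ := by
    intro v
    obtain ⟨δ₀, hδ₀⟩ := hSne
    rw [Finset.mem_filter] at hδ₀
    refine Finset.sum_pos' (fun δ hδ => mul_nonneg (hw δ hδ) (Real.exp_pos _).le)
      ⟨δ₀, hδ₀.1, mul_pos hδ₀.2 (Real.exp_pos _)⟩
  -- sums over Δ and S agree
  have hsum_eq : ∀ v : EuclideanSpace ℝ (Fin d),
      ∑ δ ∈ Δ, w δ * Real.exp ⟪v, δ⟫ = ∑ δ ∈ S, w δ * Real.exp ⟪v, δ⟫ := by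
    intro v
    refine (Finset.sum_subset hSsub ?_).symm
    intro δ hδ hδ'
    have : w δ = 0 := by
      by_contra hne
      exact hδ' (Finset.mem_filter.mpr ⟨hδ, lt_of_le_of_ne (hw δ hδ) (Ne.symm hne)⟩)
    simp [this]
  have key : ∀ x, logMGFStar Δ w x < ⊤ ↔
      x ∈ convexHull ℝ (S : Set (EuclideanSpace ℝ (Fin d))) := by
    intro x
    constructor
    · -- x ∉ conv S ⇒ sup = ⊤ (contrapositive)
      intro hlt
      by_contra hx
      have hclosed : IsClosed (convexHull ℝ (S : Set (EuclideanSpace ℝ (Fin d)))) :=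
        S.finite_toSet.isClosed_convexHull (𝕜 := ℝ)
      obtain ⟨f, u, hfu, hux⟩ :=
        geometric_hahn_banach_closed_point (convex_convexHull ℝ _) hclosed hx
      set v : EuclideanSpace ℝ (Fin d) :=
        (InnerProductSpace.toDual ℝ (EuclideanSpace ℝ (Fin d))).symm f with hv
      have hvf : ∀ y, ⟪v, y⟫ = f y := fun y => InnerProductSpace.toDual_symm_apply
      have hSpos : 0 < ∑ δ ∈ S, w δ :=
        Finset.sum_pos (fun δ hδ => (Finset.mem_filter.mp hδ).2) hSne
      -- for any t ≥ 0, the value at t • v is at least t*(f x - u) - log(∑_S w)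
      have hval : ∀ t : ℝ, 0 ≤ t →
          t * (f x - u) - Real.log (∑ δ ∈ S, w δ) ≤ ⟪t • v, x⟫ - logMGF Δ w (t • v) := by
        intro t ht
        have hΦle : logMGF Δ w (t • v) ≤ Real.log (∑ δ ∈ S, w δ) + t * u := by
          have hb : ∑ δ ∈ Δ, w δ * Real.exp ⟪t • v, δ⟫
              ≤ (∑ δ ∈ S, w δ) * Real.exp (t * u) := by
            rw [hsum_eq, Finset.sum_mul]
            refine Finset.sum_le_sum fun δ hδ => ?_
            have hwδ : 0 < w δ := (Finset.mem_filter.mp hδ).2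
            have hfδ : f δ < u := hfu δ (subset_convexHull ℝ _ (by exact_mod_cast hδ))
            have : ⟪t • v, δ⟫ = t * f δ := by rw [real_inner_smul_left, hvf]
            rw [this]
            exact mul_le_mul_of_nonneg_left
              (Real.exp_le_exp.mpr (mul_le_mul_of_nonneg_left hfδ.le ht)) hwδ.le
          calc logMGF Δ w (t • v) ≤ Real.log ((∑ δ ∈ S, w δ) * Real.exp (t * u)) :=
                Real.log_le_log (hpos _) hb
            _ = Real.log (∑ δ ∈ S, w δ) + t * u := by
                rw [Real.log_mul (ne_of_gt hSpos) (Real.exp_ne_zero _), Real.log_exp]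
        have hix : ⟪t • v, x⟫ = t * f x := by rw [real_inner_smul_left, hvf]
        rw [hix]
        nlinarith
      -- hence the supremum is ⊤
      have htop : logMGFStar Δ w x = ⊤ := by
        rw [logMGFStar, iSup_eq_top]
        intro b hb
        induction b with
        | bot => exact ⟨0, EReal.bot_lt_coe _⟩
        | coe r =>
            have hfx : 0 < f x - u := by linarith
            set t : ℝ := max 0 ((r + 1 + Real.log (∑ δ ∈ S, w δ)) / (f x - u)) with htdef
            refine ⟨t • v, ?_⟩
            have h1 := hval t (le_max_left _ _)
            have h2 : (r + 1 + Real.log (∑ δ ∈ S, w δ)) / (f x - u) ≤ t := le_max_right _ _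
            have h3 : r + 1 + Real.log (∑ δ ∈ S, w δ) ≤ t * (f x - u) := by
              rw [div_le_iff₀ hfx] at h2; linarith
            have h4 : r + 1 ≤ ⟪t • v, x⟫ - logMGF Δ w (t • v) := by linarith
            exact_mod_cast lt_of_lt_of_le (by exact_mod_cast (lt_add_one r) :
              (r : EReal) < ((r + 1 : ℝ) : EReal)) (EReal.coe_le_coe_iff.mpr h4)
        | top => exact absurd hb (lt_irrefl _)
      rw [htop] at hlt
      exact lt_irrefl _ hlt
    · -- x ∈ conv S ⇒ sup bounded
      intro hx
      obtain ⟨t, ht0, ht1, htx⟩ := Finset.mem_convexHull'.mp hx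
      have hbound : ∀ v : EuclideanSpace ℝ (Fin d),
          ⟪v, x⟫ - logMGF Δ w v ≤ ∑ δ ∈ S, t δ * (-Real.log (w δ)) := by
        intro v
        have hΦ : ∀ δ ∈ S, ⟪v, δ⟫ - logMGF Δ w v ≤ -Real.log (w δ) := by
          intro δ hδ
          have hwδ : 0 < w δ := (Finset.mem_filter.mp hδ).2
          have hterm : w δ * Real.exp ⟪v, δ⟫ ≤ ∑ δ' ∈ Δ, w δ' * Real.exp ⟪v, δ'⟫ :=
            Finset.single_le_sum
              (fun δ' hδ' => mul_nonneg (hw δ' hδ') (Real.exp_pos _).le) (hSsub hδ)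
          have hlog : Real.log (w δ) + ⟪v, δ⟫ ≤ logMGF Δ w v := by
            have := Real.log_le_log (mul_pos hwδ (Real.exp_pos _)) hterm
            rwa [Real.log_mul (ne_of_gt hwδ) (Real.exp_ne_zero _), Real.log_exp] at this
          linarith
        have hix : ⟪v, x⟫ = ∑ δ ∈ S, t δ * ⟪v, δ⟫ := by
          rw [← htx, inner_sum]
          exact Finset.sum_congr rfl fun δ _ => real_inner_smul_right v δ (t δ)
        calc ⟪v, x⟫ - logMGF Δ w v
            = ∑ δ ∈ S, t δ * (⟪v, δ⟫ - logMGF Δ w v) := by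
              simp only [mul_sub, Finset.sum_sub_distrib, ← Finset.sum_mul, ht1, one_mul, hix]
          _ ≤ ∑ δ ∈ S, t δ * (-Real.log (w δ)) :=
              Finset.sum_le_sum fun δ hδ =>
                mul_le_mul_of_nonneg_left (hΦ δ hδ) (ht0 δ hδ)
      calc logMGFStar Δ w x
          ≤ ((∑ δ ∈ S, t δ * (-Real.log (w δ)) : ℝ) : EReal) :=
            iSup_le fun v => EReal.coe_le_coe_iff.mpr (hbound v)
        _ < ⊤ := EReal.coe_lt_top _
  refine ⟨fun x => by rw [hSset]; exact key x, fun hall => ?_⟩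
  have hSΔ : S = Δ := Finset.filter_true_of_mem hall
  ext x
  simp only [Set.mem_setOf_eq, key x, hSΔ]
end

section
/- The Legendre–Fenchel transform Φ* is strictly convex on the relative (intrinsic) interior of conv S: for all x ≠ y in the relative interior of conv S and all 0 < λ < 1, Φ*(λx + (1−λ)y) < λΦ*(x) + (1−λ)Φ*(y). -/
open scoped RealInnerProductSpace

variable {d : ℕ}
local notation "E" => EuclideanSpace ℝ (Fin d)

lemma sumPos (Δ : Finset E) (w : E → ℝ) (hw : ∀ δ ∈ Δ, 0 ≤ w δ)
    (hwpos : 0 < ∑ δ ∈ Δ, w δ) (v : E) :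
    0 < ∑ δ ∈ Δ, w δ * Real.exp ⟪v, δ⟫ := by
  obtain ⟨δ₀, hδ₀, hpos⟩ : ∃ δ ∈ Δ, 0 < w δ := by
    by_contra h
    push_neg at h
    have : ∑ δ ∈ Δ, w δ ≤ 0 := Finset.sum_nonpos h
    linarith
  refine Finset.sum_pos' (fun δ hδ => mul_nonneg (hw δ hδ) (Real.exp_pos _).le) ?_
  exact ⟨δ₀, hδ₀, mul_pos hpos (Real.exp_pos _)⟩

lemma logMGF_lb (Δ : Finset E) (w : E → ℝ) (hw : ∀ δ ∈ Δ, 0 ≤ w δ)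
    (hwpos : 0 < ∑ δ ∈ Δ, w δ) (v : E) {δ : E} (hδ : δ ∈ Δ) (hpos : 0 < w δ) :
    Real.log (w δ) + ⟪v, δ⟫ ≤ logMGF Δ w v := by
  have h1 : w δ * Real.exp ⟪v, δ⟫ ≤ ∑ δ' ∈ Δ, w δ' * Real.exp ⟪v, δ'⟫ :=
    Finset.single_le_sum (fun δ' hδ' => mul_nonneg (hw δ' hδ') (Real.exp_pos _).le) hδ
  have h2 := Real.log_le_log (mul_pos hpos (Real.exp_pos _)) h1
  rwa [Real.log_mul (ne_of_gt hpos) (Real.exp_ne_zero _), Real.log_exp] at h2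

lemma logMGF_cont (Δ : Finset E) (w : E → ℝ) (hw : ∀ δ ∈ Δ, 0 ≤ w δ)
    (hwpos : 0 < ∑ δ ∈ Δ, w δ) : Continuous (logMGF Δ w) := by
  have hc : Continuous fun v : E => ∑ δ ∈ Δ, w δ * Real.exp ⟪v, δ⟫ := by
    refine continuous_finset_sum _ fun δ _ => Continuous.mul continuous_const ?_
    exact Real.continuous_exp.comp (Continuous.inner continuous_id continuous_const)
  refine continuous_iff_continuousAt.mpr fun v => ?_
  exact ContinuousAt.comp (Real.continuousAt_log (ne_of_gt (sumPos Δ w hw hwpos v))) (hc.continuousAt (x := v))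

lemma logMGF_factor (Δ : Finset E) (w : E → ℝ) (hw : ∀ δ ∈ Δ, 0 ≤ w δ)
    (hwpos : 0 < ∑ δ ∈ Δ, w δ) {x : E}
    (hx : x ∈ affineSpan ℝ {δ : E | δ ∈ Δ ∧ 0 < w δ}) (v : E) :
    ⟪v, x⟫ - logMGF Δ w v =
      ⟪(↑(Submodule.orthogonalProjection (affineSpan ℝ {δ : E | δ ∈ Δ ∧ 0 < w δ}).direction v) : E), x⟫
        - logMGF Δ w (↑(Submodule.orthogonalProjection (affineSpan ℝ {δ : E | δ ∈ Δ ∧ 0 < w δ}).direction v)) := by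
  set A := affineSpan ℝ {δ : E | δ ∈ Δ ∧ 0 < w δ}
  set p : E := ↑(Submodule.orthogonalProjection A.direction v) with hp
  have hq : v - p ∈ A.directionᗮ := Submodule.sub_starProjection_mem_orthogonal (K := A.direction) v
  have hqz : ∀ u ∈ A.direction, ⟪v - p, u⟫ = 0 := by
    intro u hu
    have := (Submodule.mem_orthogonal _ _).mp hq u hu
    rwa [real_inner_comm] at this
  have key : ∀ δ ∈ Δ, w δ * Real.exp ⟪v, δ⟫
      = Real.exp ⟪v - p, x⟫ * (w δ * Real.exp ⟪p, δ⟫) := by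
    intro δ hδ
    rcases eq_or_lt_of_le (hw δ hδ) with h0 | h0
    · rw [← h0]; ring
    · have hδA : δ ∈ A := subset_affineSpan ℝ _ ⟨hδ, h0⟩
      have hdir : δ - x ∈ A.direction := AffineSubspace.vsub_mem_direction hδA hx
      have h1 : ⟪v - p, δ⟫ = ⟪v - p, x⟫ := by
        have := hqz _ hdir
        rw [inner_sub_right] at this
        linarith
      have h2 : ⟪v, δ⟫ = ⟪v - p, x⟫ + ⟪p, δ⟫ := by
        rw [← h1, inner_sub_left]; ring
      rw [h2, Real.exp_add]; ring
  have hsum : ∑ δ ∈ Δ, w δ * Real.exp ⟪v, δ⟫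
      = Real.exp ⟪v - p, x⟫ * ∑ δ ∈ Δ, w δ * Real.exp ⟪p, δ⟫ := by
    rw [Finset.mul_sum]; exact Finset.sum_congr rfl key
  have hΦ : logMGF Δ w v = ⟪v - p, x⟫ + logMGF Δ w p := by
    unfold logMGF
    rw [hsum, Real.log_mul (Real.exp_ne_zero _) (ne_of_gt (sumPos Δ w hw hwpos p)), Real.log_exp]
  have hlin : ⟪v, x⟫ = ⟪v - p, x⟫ + ⟪p, x⟫ := by rw [inner_sub_left]; ring
  rw [hΦ, hlin]; ring

lemma step_in (s : Set E) {x p : E} (hx : x ∈ intrinsicInterior ℝ s)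
    (hp : p ∈ (affineSpan ℝ s).direction) : ∃ ε : ℝ, 0 < ε ∧ x + ε • p ∈ s := by
  obtain ⟨x', hx', hxx⟩ := (Set.mem_image _ _ _).mp hx
  obtain ⟨r, hr, hball⟩ := Metric.mem_nhds_iff.mp (mem_interior_iff_mem_nhds.mp hx')
  set ε : ℝ := r / (2 * (‖p‖ + 1)) with hε
  have hnorm : 0 < ‖p‖ + 1 := by positivity
  have hεpos : 0 < ε := by positivity
  have hxs : x ∈ affineSpan ℝ s := by
    rw [← hxx]; exact x'.2
  have hmem : x + ε • p ∈ affineSpan ℝ s := by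
    have := AffineSubspace.vadd_mem_of_mem_direction
      (Submodule.smul_mem _ ε hp) hxs
    simpa [vadd_eq_add, add_comm] using this
  have hdist : (⟨x + ε • p, hmem⟩ : affineSpan ℝ s) ∈ Metric.ball x' r := by
    rw [Metric.mem_ball, Subtype.dist_eq]
    simp only [hxx]
    rw [dist_eq_norm]
    have : x + ε • p - x = ε • p := by abel
    rw [this, norm_smul, Real.norm_eq_abs, abs_of_pos hεpos]
    rw [hε, div_mul_eq_mul_div, div_lt_iff₀ (by positivity)]
    nlinarith [norm_nonneg p]
  exact ⟨ε, hεpos, hball hdist⟩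

lemma exists_c (Δ : Finset E) (w : E → ℝ) {x : E}
    (hx : x ∈ intrinsicInterior ℝ (convexHull ℝ {δ : E | δ ∈ Δ ∧ 0 < w δ}))
    (hT : (Δ.filter (fun δ => 0 < w δ)).Nonempty) :
    ∃ c : ℝ, 0 < c ∧ ∀ p ∈ (affineSpan ℝ {δ : E | δ ∈ Δ ∧ 0 < w δ}).direction,
      c * ‖p‖ ≤ (Δ.filter (fun δ => 0 < w δ)).sup' hT (fun δ => ⟪p, δ - x⟫) := by
  classical
  set S : Set E := {δ : E | δ ∈ Δ ∧ 0 < w δ} with hS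
  set T : Finset E := Δ.filter (fun δ => 0 < w δ) with hTdef
  set V : Submodule ℝ E := (affineSpan ℝ S).direction with hV
  set h : E → ℝ := fun p => T.sup' hT (fun δ => ⟪p, δ - x⟫) with hh
  have hcont : Continuous h := by
    refine continuous_iff_continuousAt.mpr fun p => ?_
    exact ContinuousAt.finset_sup'_apply hT fun δ _ =>
      (Continuous.inner continuous_id continuous_const).continuousAt
  have h0eq : h 0 = 0 := by
    obtain ⟨δ, hδ⟩ := hT
    have h1 : ∀ δ' ∈ T, ⟪(0:E), δ' - x⟫ = (0:ℝ) := fun δ' _ => inner_zero_left _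
    have h2 : h 0 = T.sup' hT (fun _ => (0:ℝ)) := Finset.sup'_congr hT rfl h1
    rw [h2, Finset.sup'_const]
  -- upper bound over convex hull
  have hhull : ∀ p : E, ∀ u ∈ convexHull ℝ S, ⟪p, u - x⟫ ≤ h p := by
    intro p u hu
    have hcvx : Convex ℝ {u : E | ⟪p, u⟫ ≤ h p + ⟪p, x⟫} :=
      convex_halfSpace_le ⟨fun a b => inner_add_right p a b,
        fun c a => real_inner_smul_right p a c⟩ _
    have hsub : S ⊆ {u : E | ⟪p, u⟫ ≤ h p + ⟪p, x⟫} := by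
      intro δ hδ
      have hδT : δ ∈ T := by
        rw [hTdef, Finset.mem_filter]; exact ⟨hδ.1, hδ.2⟩
      have := Finset.le_sup' (fun δ => ⟪p, δ - x⟫) hδT
      simp only [Set.mem_setOf_eq]
      rw [inner_sub_right] at this
      linarith
    have := convexHull_min hsub hcvx hu
    simp only [Set.mem_setOf_eq] at this
    rw [inner_sub_right]
    linarith
  -- positivity on V
  have hpos : ∀ p ∈ V, p ≠ 0 → 0 < h p := by
    intro p hp hp0
    have hp' : p ∈ (affineSpan ℝ (convexHull ℝ S)).direction := by
      rwa [affineSpan_convexHull]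
    obtain ⟨ε, hε, hmem⟩ := step_in (convexHull ℝ S) hx hp'
    have hb := hhull p _ hmem
    have heq : x + ε • p - x = ε • p := by abel
    rw [heq, real_inner_smul_right] at hb
    have hpp : 0 < ⟪p, p⟫ := by
      rw [real_inner_self_eq_norm_sq]
      have := norm_pos_iff.mpr hp0
      positivity
    nlinarith
  -- homogeneity
  have hhomog : ∀ p : E, p ≠ 0 → h p = ‖p‖ * h ((‖p‖⁻¹ : ℝ) • p) := by
    intro p hpne
    have hpn : (0:ℝ) < ‖p‖ := norm_pos_iff.mpr hpne
    have hfun : ∀ δ ∈ T, ⟪p, δ - x⟫ = ((fun a : ℝ => ‖p‖ * a) ∘ fun δ => ⟪(‖p‖⁻¹:ℝ) • p, δ - x⟫) δ := by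
      intro δ _
      simp only [Function.comp_apply, real_inner_smul_left]
      field_simp
    have h2 : h p = T.sup' hT ((fun a : ℝ => ‖p‖ * a) ∘ fun δ => ⟪(‖p‖⁻¹:ℝ) • p, δ - x⟫) :=
      Finset.sup'_congr hT rfl hfun
    rw [h2]
    exact (Finset.comp_sup'_eq_sup'_comp hT (fun a : ℝ => ‖p‖ * a)
      (fun a b => mul_max_of_nonneg a b hpn.le)).symm
  -- case split
  by_cases hVbot : ∀ p ∈ V, p = (0 : E)
  · refine ⟨1, one_pos, fun p hp => ?_⟩
    show 1 * ‖p‖ ≤ h p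
    rw [hVbot p hp, h0eq]
    simp
  · push_neg at hVbot
    obtain ⟨p₁, hp₁V, hp₁0⟩ := hVbot
    set K : Set E := Metric.sphere 0 1 ∩ V with hK
    have hKcomp : IsCompact K :=
      (isCompact_sphere _ _).inter_right (Submodule.closed_of_finiteDimensional V)
    have hKne : K.Nonempty := by
      refine ⟨(‖p₁‖⁻¹ : ℝ) • p₁, ?_, Submodule.smul_mem _ _ hp₁V⟩
      simp only [mem_sphere_iff_norm, sub_zero, norm_smul, norm_inv, norm_norm]
      exact inv_mul_cancel₀ (norm_ne_zero_iff.mpr hp₁0)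
    obtain ⟨p₀, hp₀K, hp₀min⟩ := hKcomp.exists_isMinOn hKne hcont.continuousOn
    have hp₀V : p₀ ∈ V := hp₀K.2
    have hp₀n : ‖p₀‖ = 1 := by simpa using hp₀K.1
    have hp₀0 : p₀ ≠ 0 := by intro h0; rw [h0] at hp₀n; simp at hp₀n
    refine ⟨h p₀, hpos p₀ hp₀V hp₀0, fun p hp => ?_⟩
    show h p₀ * ‖p‖ ≤ h p
    rcases eq_or_ne p 0 with rfl | hpne
    · rw [h0eq]; simp
    · have hpn : (0:ℝ) < ‖p‖ := norm_pos_iff.mpr hpne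
      have hunit : (‖p‖⁻¹ : ℝ) • p ∈ K := by
        refine ⟨?_, Submodule.smul_mem _ _ hp⟩
        simp only [mem_sphere_iff_norm, sub_zero, norm_smul, norm_inv, norm_norm]
        exact inv_mul_cancel₀ (ne_of_gt hpn)
      have hmin : h p₀ ≤ h ((‖p‖⁻¹ : ℝ) • p) := hp₀min hunit
      rw [hhomog p hpne]
      nlinarith

lemma exists_max (Δ : Finset E) (w : E → ℝ) (hw : ∀ δ ∈ Δ, 0 ≤ w δ)
    (hwpos : 0 < ∑ δ ∈ Δ, w δ) {x : E}
    (hx : x ∈ affineSpan ℝ {δ : E | δ ∈ Δ ∧ 0 < w δ})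
    {c C : ℝ} (hc : 0 < c)
    (hbd : ∀ p ∈ (affineSpan ℝ {δ : E | δ ∈ Δ ∧ 0 < w δ}).direction,
      ⟪p, x⟫ - logMGF Δ w p ≤ C - c * ‖p‖) :
    ∃ v : E, ∀ u : E, ⟪u, x⟫ - logMGF Δ w u ≤ ⟪v, x⟫ - logMGF Δ w v := by
  classical
  set V : Submodule ℝ E := (affineSpan ℝ {δ : E | δ ∈ Δ ∧ 0 < w δ}).direction with hV
  set F : E → ℝ := fun v => ⟪v, x⟫ - logMGF Δ w v with hF
  have hFcont : Continuous F := by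
    refine Continuous.sub ?_ (logMGF_cont Δ w hw hwpos)
    exact Continuous.inner continuous_id continuous_const
  have hfac : ∀ v : E, F v = F (↑(Submodule.orthogonalProjection V v)) := fun v =>
    logMGF_factor Δ w hw hwpos hx v
  have hF0 : F 0 ≤ C := by
    have h := hbd 0 (Submodule.zero_mem V)
    rw [norm_zero, mul_zero, sub_zero] at h
    exact h
  set R : ℝ := (C - F 0) / c + 1 with hR
  have hRpos : 0 < R := by
    have h5 : 0 ≤ (C - F 0) / c := div_nonneg (by linarith) hc.le
    rw [hR]; linarith
  set K : Set E := Metric.closedBall 0 R ∩ V with hK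
  have hKcomp : IsCompact K :=
    (isCompact_closedBall _ _).inter_right (Submodule.closed_of_finiteDimensional V)
  have h0K : (0 : E) ∈ K := ⟨Metric.mem_closedBall_self hRpos.le, Submodule.zero_mem V⟩
  obtain ⟨v, hvK, hvmax⟩ := hKcomp.exists_isMaxOn ⟨0, h0K⟩ hFcont.continuousOn
  refine ⟨v, fun u => ?_⟩
  show F u ≤ F v
  rw [hfac u]
  set p : E := ↑(Submodule.orthogonalProjection V u) with hp
  have hpV : p ∈ V := Submodule.coe_mem _
  by_cases hle : ‖p‖ ≤ R
  · exact hvmax ⟨Metric.mem_closedBall.mpr (by simpa using hle), hpV⟩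
  · push_neg at hle
    have h1 : F p ≤ C - c * ‖p‖ := hbd p hpV
    have h2 : C - c * ‖p‖ < C - c * R := by nlinarith
    have h3 : C - c * R = F 0 - c := by rw [hR]; field_simp; ring
    have h4 : F 0 ≤ F v := hvmax h0K
    linarith

lemma max_unique (Δ : Finset E) (w : E → ℝ) (hw : ∀ δ ∈ Δ, 0 ≤ w δ)
    (hwpos : 0 < ∑ δ ∈ Δ, w δ) {x y v : E}
    (hx : ∀ u : E, ⟪u, x⟫ - logMGF Δ w u ≤ ⟪v, x⟫ - logMGF Δ w v)
    (hy : ∀ u : E, ⟪u, y⟫ - logMGF Δ w u ≤ ⟪v, y⟫ - logMGF Δ w v) : x = y := by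
  set G : E → ℝ := fun e =>
    (∑ δ ∈ Δ, w δ * (Real.exp ⟪v, δ⟫ * ⟪e, δ⟫)) / (∑ δ ∈ Δ, w δ * Real.exp ⟪v, δ⟫) with hG
  have key : ∀ z : E, (∀ u : E, ⟪u, z⟫ - logMGF Δ w u ≤ ⟪v, z⟫ - logMGF Δ w v) →
      ∀ e : E, ⟪e, z⟫ = G e := by
    intro z hmax e
    set f : ℝ → ℝ := fun t => ∑ δ ∈ Δ, w δ * Real.exp (⟪v, δ⟫ + t * ⟪e, δ⟫) with hf
    have hf0 : f 0 = ∑ δ ∈ Δ, w δ * Real.exp ⟪v, δ⟫ := by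
      simp [hf]
    have hfpos : 0 < f 0 := by rw [hf0]; exact sumPos Δ w hw hwpos v
    have hderiv : HasDerivAt f (∑ δ ∈ Δ, w δ * (Real.exp ⟪v, δ⟫ * ⟪e, δ⟫)) 0 := by
      refine HasDerivAt.fun_sum fun δ _ => ?_
      have h1 : HasDerivAt (fun t : ℝ => ⟪v, δ⟫ + t * ⟪e, δ⟫) ⟪e, δ⟫ 0 := by
        simpa using ((hasDerivAt_id (0:ℝ)).mul_const ⟪e, δ⟫).const_add ⟪v, δ⟫
      have h2 := (h1.exp).const_mul (w δ)
      simpa using h2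
    have hφ : HasDerivAt (fun t : ℝ => ⟪v, z⟫ + t * ⟪e, z⟫ - Real.log (f t))
        (⟪e, z⟫ - (∑ δ ∈ Δ, w δ * (Real.exp ⟪v, δ⟫ * ⟪e, δ⟫)) / f 0) 0 := by
      have h3 : HasDerivAt (fun t : ℝ => ⟪v, z⟫ + t * ⟪e, z⟫) ⟪e, z⟫ 0 := by
        simpa using ((hasDerivAt_id (0:ℝ)).mul_const ⟪e, z⟫).const_add ⟪v, z⟫
      exact h3.sub (hderiv.log (ne_of_gt hfpos))
    have hlm : IsLocalMax (fun t : ℝ => ⟪v, z⟫ + t * ⟪e, z⟫ - Real.log (f t)) 0 := by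
      apply Filter.Eventually.of_forall
      intro t
      have h2 := hmax (v + t • e)
      have hin : ⟪v + t • e, z⟫ = ⟪v, z⟫ + t * ⟪e, z⟫ := by
        rw [inner_add_left, real_inner_smul_left]
      have hlog : logMGF Δ w (v + t • e) = Real.log (f t) := by
        unfold logMGF
        congr 1
        refine Finset.sum_congr rfl fun δ _ => ?_
        rw [inner_add_left, real_inner_smul_left]
      have hlog0 : logMGF Δ w v = Real.log (f 0) := by
        unfold logMGF
        rw [hf0]
      simp only
      rw [hlog0] at h2
      rw [hin, hlog] at h2
      simpa using h2
    have hz := hlm.hasDerivAt_eq_zero hφ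
    have : ⟪e, z⟫ = (∑ δ ∈ Δ, w δ * (Real.exp ⟪v, δ⟫ * ⟪e, δ⟫)) / f 0 := by linarith
    rw [this, hG, hf0]
  have hinner : ∀ e : E, ⟪e, x - y⟫ = 0 := by
    intro e
    rw [inner_sub_right, key x hx e, key y hy e]
    ring
  have h0 := hinner (x - y)
  rw [inner_self_eq_zero] at h0
  exact sub_eq_zero.mp h0

lemma star_eq (Δ : Finset E) (w : E → ℝ) {x v : E}
    (hv : ∀ u : E, ⟪u, x⟫ - logMGF Δ w u ≤ ⟪v, x⟫ - logMGF Δ w v) :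
    logMGFStar Δ w x = ((⟪v, x⟫ - logMGF Δ w v : ℝ) : EReal) :=
  le_antisymm (iSup_le fun u => EReal.coe_le_coe_iff.mpr (hv u))
    (le_iSup (fun u : E => ((⟪u, x⟫ - logMGF Δ w u : ℝ) : EReal)) v)

lemma coercive (Δ : Finset E) (w : E → ℝ) (hw : ∀ δ ∈ Δ, 0 ≤ w δ)
    (hwpos : 0 < ∑ δ ∈ Δ, w δ) {x : E}
    (hx : x ∈ intrinsicInterior ℝ (convexHull ℝ {δ : E | δ ∈ Δ ∧ 0 < w δ})) :
    ∃ c C : ℝ, 0 < c ∧ ∀ p ∈ (affineSpan ℝ {δ : E | δ ∈ Δ ∧ 0 < w δ}).direction,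
      ⟪p, x⟫ - logMGF Δ w p ≤ C - c * ‖p‖ := by
  classical
  have hT : (Δ.filter (fun δ => 0 < w δ)).Nonempty := by
    obtain ⟨δ₀, hδ₀, hpos⟩ : ∃ δ ∈ Δ, 0 < w δ := by
      by_contra h
      push_neg at h
      have : ∑ δ ∈ Δ, w δ ≤ 0 := Finset.sum_nonpos h
      linarith
    exact ⟨δ₀, Finset.mem_filter.mpr ⟨hδ₀, hpos⟩⟩
  obtain ⟨c, hc, hcb⟩ := exists_c Δ w hx hT
  refine ⟨c, (Δ.filter (fun δ => 0 < w δ)).sup' hT (fun δ => -Real.log (w δ)), hc, fun p hp => ?_⟩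
  obtain ⟨δ₀, hδ₀, hsup⟩ := Finset.exists_mem_eq_sup' hT (fun δ => ⟪p, δ - x⟫)
  have h1 := hcb p hp
  rw [hsup] at h1
  have hδΔ : δ₀ ∈ Δ := (Finset.mem_filter.mp hδ₀).1
  have hδpos : 0 < w δ₀ := (Finset.mem_filter.mp hδ₀).2
  have h2 := logMGF_lb Δ w hw hwpos p hδΔ hδpos
  have h3 : -Real.log (w δ₀) ≤ (Δ.filter (fun δ => 0 < w δ)).sup' hT (fun δ => -Real.log (w δ)) :=
    Finset.le_sup' (f := fun δ => -Real.log (w δ)) hδ₀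
  rw [inner_sub_right] at h1
  linarith

/-- Φ* is strictly convex on the relative (intrinsic) interior of
conv S, where S = {δ ∈ Δ : w(δ) > 0} is the support of the weights. -/
theorem logMGFStar_strictly_convex_on_relint (d : ℕ) (hd : 1 ≤ d)
    (Δ : Finset (EuclideanSpace ℝ (Fin d))) (hΔ : Δ.Nonempty)
    (w : EuclideanSpace ℝ (Fin d) → ℝ) (hw : ∀ δ ∈ Δ, 0 ≤ w δ)
    (hwpos : 0 < ∑ δ ∈ Δ, w δ) :
    ∀ x ∈ intrinsicInterior ℝ
        (convexHull ℝ {δ : EuclideanSpace ℝ (Fin d) | δ ∈ Δ ∧ 0 < w δ}),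
      ∀ y ∈ intrinsicInterior ℝ
        (convexHull ℝ {δ : EuclideanSpace ℝ (Fin d) | δ ∈ Δ ∧ 0 < w δ}),
      x ≠ y → ∀ a b : ℝ, 0 < a → 0 < b → a + b = 1 →
        logMGFStar Δ w (a • x + b • y) <
          (a : EReal) * logMGFStar Δ w x + (b : EReal) * logMGFStar Δ w y := by
  intro x hx y hy hxy a b ha hb hab
  set S : Set (EuclideanSpace ℝ (Fin d)) := {δ : EuclideanSpace ℝ (Fin d) | δ ∈ Δ ∧ 0 < w δ} with hS
  have hxA : x ∈ affineSpan ℝ S :=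
    convexHull_subset_affineSpan S (intrinsicInterior_subset hx)
  have hyA : y ∈ affineSpan ℝ S :=
    convexHull_subset_affineSpan S (intrinsicInterior_subset hy)
  have hzeq : a • x + b • y = b • (y - x) + x := by
    have ha' : a = 1 - b := by linarith
    rw [ha']
    module
  have hzA : a • x + b • y ∈ affineSpan ℝ S := by
    rw [hzeq]
    have hd' : y - x ∈ (affineSpan ℝ S).direction :=
      AffineSubspace.vsub_mem_direction hyA hxA
    have := AffineSubspace.vadd_mem_of_mem_direction
      (Submodule.smul_mem _ b hd') hxA
    simpa using this
  obtain ⟨cx, Cx, hcx, hbx⟩ := coercive Δ w hw hwpos hx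
  obtain ⟨cy, Cy, hcy, hby⟩ := coercive Δ w hw hwpos hy
  have hbz : ∀ p ∈ (affineSpan ℝ S).direction,
      ⟪p, a • x + b • y⟫ - logMGF Δ w p ≤ (a * Cx + b * Cy) - (a * cx + b * cy) * ‖p‖ := by
    intro p hp
    have h1 := hbx p hp
    have h2 := hby p hp
    have h3 : ⟪p, a • x + b • y⟫ = a * ⟪p, x⟫ + b * ⟪p, y⟫ := by
      rw [inner_add_right, real_inner_smul_right, real_inner_smul_right]
    have h4 : a * logMGF Δ w p + b * logMGF Δ w p = logMGF Δ w p := by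
      rw [← add_mul, hab, one_mul]
    rw [h3]
    linarith [mul_le_mul_of_nonneg_left h1 ha.le, mul_le_mul_of_nonneg_left h2 hb.le]
  obtain ⟨vx, hvx⟩ := exists_max Δ w hw hwpos hxA hcx hbx
  obtain ⟨vy, hvy⟩ := exists_max Δ w hw hwpos hyA hcy hby
  obtain ⟨vz, hvz⟩ := exists_max Δ w hw hwpos hzA (by positivity : (0:ℝ) < a * cx + b * cy) hbz
  rw [star_eq Δ w hvx, star_eq Δ w hvy, star_eq Δ w hvz]
  rw [← EReal.coe_mul, ← EReal.coe_mul, ← EReal.coe_add, EReal.coe_lt_coe_iff]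
  set gx : ℝ := ⟪vx, x⟫ - logMGF Δ w vx with hgx
  set gy : ℝ := ⟪vy, y⟫ - logMGF Δ w vy with hgy
  have h1 : ⟪vz, x⟫ - logMGF Δ w vz ≤ gx := hvx vz
  have h2 : ⟪vz, y⟫ - logMGF Δ w vz ≤ gy := hvy vz
  have hne : ¬(⟪vz, x⟫ - logMGF Δ w vz = gx ∧ ⟪vz, y⟫ - logMGF Δ w vz = gy) := by
    rintro ⟨e1, e2⟩
    refine hxy (max_unique Δ w hw hwpos (v := vz) ?_ ?_)
    · intro u; rw [e1]; exact hvx u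
    · intro u; rw [e2]; exact hvy u
  have hsplit : ⟪vz, a • x + b • y⟫ - logMGF Δ w vz
      = a * (⟪vz, x⟫ - logMGF Δ w vz) + b * (⟪vz, y⟫ - logMGF Δ w vz) := by
    rw [inner_add_right, real_inner_smul_right, real_inner_smul_right]
    have h4 : a * logMGF Δ w vz + b * logMGF Δ w vz = logMGF Δ w vz := by
      rw [← add_mul, hab, one_mul]
    linarith
  rw [hsplit]
  rcases lt_or_eq_of_le h1 with h1' | h1'
  · linarith [mul_lt_mul_of_pos_left h1' ha, mul_le_mul_of_nonneg_left h2 hb.le]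
  · have h2' : ⟪vz, y⟫ - logMGF Δ w vz < gy := by
      rcases lt_or_eq_of_le h2 with h | h
      · exact h
      · exact absurd ⟨h1', h⟩ hne
    linarith [mul_lt_mul_of_pos_left h2' hb, mul_le_mul_of_nonneg_left h1 ha.le]
end

section
/- The Legendre–Fenchel transform Φ* is continuous relative to its effective domain: the restriction of Φ* to the polytope conv S is a continuous real-valued function (i.e., Φ* is ContinuousOn conv S). -/
open scoped RealInnerProductSpace
open Finset

section Aux

variable {E : Type*} [NormedAddCommGroup E] [NormedSpace ℝ E] [FiniteDimensional ℝ E]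

/-- Coefficient bound for linearly independent finite families. -/
lemma exists_coeff_bound (t : Finset E) (h : LinearIndependent ℝ (fun x : (t : Set E) => (x : E))) :
    ∃ C > 0, ∀ c : E → ℝ, ∑ i ∈ t, |c i| ≤ C * ‖∑ j ∈ t, c j • j‖ := by
  classical
  have h' : LinearIndepOn ℝ id (t : Set E) := h
  set b := Module.Basis.extend h' with hb
  have hsub : (t : Set E) ⊆ h'.extend (Set.subset_univ _) := h'.subset_extend _
  set φ : E → (E →L[ℝ] ℝ) := fun i =>
    if hi : i ∈ (h'.extend (Set.subset_univ (t : Set E))) then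
      LinearMap.toContinuousLinearMap (b.coord ⟨i, hi⟩) else 0 with hφ
  refine ⟨(∑ i ∈ t, ‖φ i‖) + 1, by positivity, fun c => ?_⟩
  have key : ∀ i ∈ t, |c i| ≤ ‖φ i‖ * ‖∑ j ∈ t, c j • j‖ := by
    intro i hi
    have hi' : (i : E) ∈ h'.extend (Set.subset_univ _) := hsub hi
    have hrepr : (b.coord ⟨i, hi'⟩) (∑ j ∈ t, c j • j) = c i := by
      rw [map_sum]
      have step : ∀ j ∈ t, (b.coord ⟨i, hi'⟩) (c j • j) = if j = i then c i else 0 := by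
        intro j hj
        have hj' : (j : E) ∈ h'.extend (Set.subset_univ _) := hsub hj
        have hbj : (j : E) = b ⟨j, hj'⟩ := (Module.Basis.extend_apply_self h' ⟨j, hj'⟩).symm
        have hval : (b.repr (j : E)) ⟨i, hi'⟩ = if j = i then 1 else 0 := by
          conv_lhs => rw [hbj]
          rw [Module.Basis.repr_self, Finsupp.single_apply]
          by_cases hji : j = i
          · subst hji; rw [if_pos rfl, if_pos rfl]
          · rw [if_neg (fun hc => hji (Subtype.mk_eq_mk.mp hc)), if_neg hji]
        rw [map_smul, Module.Basis.coord_apply, hval, smul_eq_mul]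
        split_ifs with hji
        · subst hji; ring
        · ring
      rw [Finset.sum_congr rfl step, Finset.sum_ite_eq' t i, if_pos hi]
    have hphi : φ i = LinearMap.toContinuousLinearMap (b.coord ⟨i, hi'⟩) := by
      rw [hφ]; simp [hi']
    calc |c i| = |(b.coord ⟨i, hi'⟩) (∑ j ∈ t, c j • j)| := by rw [hrepr]
    _ = |(φ i) (∑ j ∈ t, c j • j)| := by rw [hphi]; rfl
    _ ≤ ‖φ i‖ * ‖∑ j ∈ t, c j • j‖ := (φ i).le_opNorm _
  calc ∑ i ∈ t, |c i| ≤ ∑ i ∈ t, ‖φ i‖ * ‖∑ j ∈ t, c j • j‖ := Finset.sum_le_sum key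
  _ = (∑ i ∈ t, ‖φ i‖) * ‖∑ j ∈ t, c j • j‖ := by rw [Finset.sum_mul]
  _ ≤ ((∑ i ∈ t, ‖φ i‖) + 1) * ‖∑ j ∈ t, c j • j‖ := by
      apply mul_le_mul_of_nonneg_right (by linarith) (norm_nonneg _)

/-- Carathéodory for conic combinations: any nonnegative combination of a finite set equals a
nonnegative combination of a linearly independent subset. -/
lemma cone_caratheodory (t : Finset E) :
    ∀ c : E → ℝ, (∀ i ∈ t, 0 ≤ c i) →
    ∃ t' : Finset E, t' ⊆ t ∧ LinearIndependent ℝ (fun x : (t' : Set E) => (x : E)) ∧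
      ∃ c' : E → ℝ, (∀ i ∈ t', 0 ≤ c' i) ∧ ∑ i ∈ t', c' i • i = ∑ i ∈ t, c i • i := by
  classical
  induction t using Finset.strongInductionOn with
  | _ t ih =>
    intro c hc
    by_cases hli : LinearIndependent ℝ (fun x : (t : Set E) => (x : E))
    · exact ⟨t, subset_rfl, hli, c, hc, rfl⟩
    obtain ⟨g, hgsum, i₁, hgi₁⟩ := Fintype.not_linearIndependent_iff.mp hli
    set G : E → ℝ := fun z => if hz : z ∈ t then g ⟨z, hz⟩ else 0 with hG
    have hGsum : ∑ z ∈ t, G z • z = 0 := by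
      rw [← Finset.sum_finset_coe (fun z => G z • z) t]
      rw [← hgsum]
      exact Finset.sum_congr rfl fun i _ => by simp [hG, i.2]
    have hGne : G (i₁ : E) ≠ 0 := by
      have : (i₁ : E) ∈ t := i₁.2
      simpa [hG, this] using hgi₁
    obtain ⟨d, hdsum, z₁, hz₁t, hz₁⟩ : ∃ d : E → ℝ,
        (∑ z ∈ t, d z • z = 0) ∧ ∃ z ∈ t, 0 < d z := by
      by_cases hpos : ∃ z ∈ t, 0 < G z
      · exact ⟨G, hGsum, hpos⟩
      · refine ⟨-G, by simp only [Pi.neg_apply, neg_smul, Finset.sum_neg_distrib, hGsum, neg_zero], (i₁ : E), i₁.2, ?_⟩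
        push_neg at hpos
        have := hpos (i₁ : E) i₁.2
        have : G (i₁ : E) < 0 := lt_of_le_of_ne this hGne
        simpa using this
    set s := t.filter (fun z => 0 < d z) with hs
    obtain ⟨i₀, hi₀s, hmin⟩ := s.exists_min_image (fun z => c z / d z)
      ⟨z₁, Finset.mem_filter.mpr ⟨hz₁t, hz₁⟩⟩
    have hd0 : 0 < d i₀ := (Finset.mem_filter.mp hi₀s).2
    have hi₀t : i₀ ∈ t := (Finset.mem_filter.mp hi₀s).1
    set τ := c i₀ / d i₀ with hτ
    have hτ0 : 0 ≤ τ := div_nonneg (hc _ hi₀t) hd0.le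
    set k : E → ℝ := fun z => c z - τ * d z with hk
    have hki₀ : k i₀ = 0 := by
      show c i₀ - τ * d i₀ = 0
      rw [hτ, div_mul_cancel₀ _ hd0.ne', sub_self]
    have hknn : ∀ z ∈ t.erase i₀, 0 ≤ k z := by
      intro z hz
      have hzt : z ∈ t := Finset.mem_of_mem_erase hz
      by_cases hzs : z ∈ s
      · have hdz : 0 < d z := (Finset.mem_filter.mp hzs).2
        have := hmin z hzs
        simp only [hk, sub_nonneg]
        exact (le_div_iff₀ hdz).mp this
      · have hdz : d z ≤ 0 := by
          by_contra hcon
          exact hzs (Finset.mem_filter.mpr ⟨hzt, lt_of_not_ge hcon⟩)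
        have : 0 ≤ -(τ * d z) := by
          rw [← mul_neg τ ]; exact mul_nonneg hτ0 (by linarith)
        simp only [hk]
        have := hc z hzt
        linarith [hc z hzt, this]
    have hksum : ∑ z ∈ t.erase i₀, k z • z = ∑ z ∈ t, c z • z := by
      have h1 : ∑ z ∈ t.erase i₀, k z • z = ∑ z ∈ t, k z • z :=
        Finset.sum_erase _ (by rw [hki₀, zero_smul])
      rw [h1]
      simp only [hk, sub_smul, mul_smul, Finset.sum_sub_distrib, ← Finset.smul_sum, hdsum,
        smul_zero, sub_zero]
    obtain ⟨t', ht'sub, ht'li, c', hc'nn, hc'sum⟩ := ih (t.erase i₀)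
      (Finset.erase_ssubset hi₀t) k hknn
    exact ⟨t', ht'sub.trans (Finset.erase_subset _ _), ht'li, c', hc'nn, by rw [hc'sum, hksum]⟩

/-- Cone property of polytopes: from any point of a polytope one can push any direction pointing
into the polytope to a uniform distance `r`. -/
lemma polytope_cone_property (S : Finset E) {x : E} (hx : x ∈ convexHull ℝ (S : Set E)) :
    ∃ r > 0, ∀ y ∈ convexHull ℝ (S : Set E), y ≠ x →
      x + (r / ‖y - x‖) • (y - x) ∈ convexHull ℝ (S : Set E) := by
  classical
  set T : Finset E := S.image (fun δ => δ - x) with hT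
  set F : Finset E → ℝ := fun t' =>
    if h : LinearIndependent ℝ (fun v : (t' : Set E) => (v : E)) then
      (exists_coeff_bound t' h).choose else 1 with hF
  have hFpos : ∀ t', 0 < F t' := by
    intro t'
    have hFt : F t' = if h : LinearIndependent ℝ (fun v : (t' : Set E) => (v : E)) then
        (exists_coeff_bound t' h).choose else 1 := rfl
    rw [hFt]
    split_ifs with h
    · exact (exists_coeff_bound t' h).choose_spec.1
    · norm_num
  have hFspec : ∀ (t' : Finset E) (h : LinearIndependent ℝ (fun v : (t' : Set E) => (v : E))) (c : E → ℝ),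
      ∑ i ∈ t', |c i| ≤ F t' * ‖∑ j ∈ t', c j • j‖ := by
    intro t' h c
    have hFt : F t' = if h : LinearIndependent ℝ (fun v : (t' : Set E) => (v : E)) then
        (exists_coeff_bound t' h).choose else 1 := rfl
    rw [hFt, dif_pos h]
    exact (exists_coeff_bound t' h).choose_spec.2 c
  have hne : (∅ : Finset E) ∈ T.powerset := Finset.mem_powerset.mpr (Finset.empty_subset _)
  set C : ℝ := T.powerset.sup' ⟨∅, hne⟩ F with hC
  have hCpos : 0 < C := lt_of_lt_of_le (hFpos ∅) (Finset.le_sup' F hne)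
  refine ⟨1 / C, by positivity, fun y hy hyx => ?_⟩
  -- representation of y
  rw [Finset.convexHull_eq] at hy
  obtain ⟨a, ha0, hasum, hay⟩ := hy
  rw [Finset.centerMass_eq_of_sum_1 _ _ hasum] at hay
  have hyx' : y - x = ∑ δ ∈ S, a δ • (δ - x) := by
    simp only [smul_sub, Finset.sum_sub_distrib, ← Finset.sum_smul, hasum, one_smul]
    rw [show ∑ i ∈ S, a i • (i : E) = y from by simpa using hay]
  have hnx : ‖y - x‖ ≠ 0 := norm_ne_zero_iff.mpr (sub_ne_zero.mpr hyx)
  set s₀ : ℝ := (1 / C) / ‖y - x‖ with hs₀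
  have hs₀pos : 0 < s₀ := by positivity
  set u : E := s₀ • (y - x) with hu
  have hunorm : ‖u‖ = 1 / C := by
    rw [hu, norm_smul, Real.norm_eq_abs, abs_of_pos hs₀pos, hs₀, div_mul_cancel₀ _ hnx]
  -- u as conic combination over T
  set c : E → ℝ := fun v => s₀ * a (v + x) with hc
  have hcu : ∑ v ∈ T, c v • v = u := by
    rw [hT, Finset.sum_image (by intro p _ q _ h; simpa using h)]
    have : ∀ δ ∈ S, c (δ - x) • (δ - x) = s₀ • (a δ • (δ - x)) := by
      intro δ _
      rw [hc]
      simp only [sub_add_cancel]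
      rw [mul_smul]
    rw [Finset.sum_congr rfl this, ← Finset.smul_sum, ← hyx', hu]
  have hc0 : ∀ v ∈ T, 0 ≤ c v := by
    intro v hv
    rw [hT, Finset.mem_image] at hv
    obtain ⟨δ, hδ, rfl⟩ := hv
    rw [hc]
    simp only [sub_add_cancel]
    exact mul_nonneg hs₀pos.le (ha0 δ hδ)
  obtain ⟨t', ht'T, ht'li, c', hc'0, hc'sum⟩ := cone_caratheodory T c hc0
  rw [hcu] at hc'sum
  -- sum of coefficients at most 1
  have hsumle : ∑ v ∈ t', c' v ≤ 1 := by
    calc ∑ v ∈ t', c' v ≤ ∑ v ∈ t', |c' v| := Finset.sum_le_sum fun v _ => le_abs_self _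
    _ ≤ F t' * ‖∑ j ∈ t', c' j • j‖ := hFspec t' ht'li c'
    _ = F t' * (1 / C) := by rw [hc'sum, hunorm]
    _ ≤ C * (1 / C) := by
        apply mul_le_mul_of_nonneg_right _ (by positivity)
        exact Finset.le_sup' F (Finset.mem_powerset.mpr ht'T)
    _ = 1 := mul_one_div_cancel hCpos.ne'
  -- conclude membership
  have hxu : x + u = (1 - ∑ v ∈ t', c' v) • x + ∑ v ∈ t', c' v • (v + x) := by
    have : ∑ v ∈ t', c' v • (v + x) = (∑ v ∈ t', c' v • v) + (∑ v ∈ t', c' v) • x := by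
      simp only [smul_add, Finset.sum_add_distrib, ← Finset.sum_smul]
    rw [this, hc'sum, sub_smul, one_smul]
    abel
  rw [hxu]
  have hconv : Convex ℝ (convexHull ℝ (S : Set E)) := convex_convexHull ℝ _
  set J : Finset (Option E) := insert none (t'.map Function.Embedding.some) with hJ
  have hnone : (none : Option E) ∉ t'.map Function.Embedding.some := by simp
  set f : Option E → ℝ := fun o => o.elim (1 - ∑ v ∈ t', c' v) c' with hf
  set gp : Option E → E := fun o => o.elim x (fun v => v + x) with hgp
  have hfs : ∑ o ∈ J, f o = 1 := by
    rw [hJ, Finset.sum_insert hnone, Finset.sum_map]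
    simp [hf]
  have hpos : ∀ o ∈ J, 0 ≤ f o := by
    intro o ho
    rw [hJ, Finset.mem_insert] at ho
    rcases ho with rfl | ho
    · simpa [hf] using sub_nonneg.mpr hsumle
    · rw [Finset.mem_map] at ho
      obtain ⟨v, hv, rfl⟩ := ho
      simpa [hf] using hc'0 v hv
  have hmem : ∀ o ∈ J, gp o ∈ convexHull ℝ (S : Set E) := by
    intro o ho
    rw [hJ, Finset.mem_insert] at ho
    rcases ho with rfl | ho
    · simpa [hgp] using hx
    · rw [Finset.mem_map] at ho
      obtain ⟨v, hv, rfl⟩ := ho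
      have hvT := ht'T hv
      rw [hT, Finset.mem_image] at hvT
      obtain ⟨δ, hδ, rfl⟩ := hvT
      simp only [hgp, Option.elim_some, Function.Embedding.some_apply, sub_add_cancel]
      exact subset_convexHull ℝ _ hδ
  have hkey := hconv.sum_mem hpos hfs hmem
  rw [hJ, Finset.sum_insert hnone, Finset.sum_map] at hkey
  simpa [hf, hgp] using hkey

end Aux

/-- Φ* is continuous relative to its effective domain: on the polytope
conv S (S = {δ ∈ Δ : w(δ) > 0}) it is finite, and Φ* is ContinuousOn conv S. -/
theorem logMGFStar_continuousOn_domain (d : ℕ) (hd : 1 ≤ d)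
    (Δ : Finset (EuclideanSpace ℝ (Fin d))) (hΔ : Δ.Nonempty)
    (w : EuclideanSpace ℝ (Fin d) → ℝ) (hw : ∀ δ ∈ Δ, 0 ≤ w δ)
    (hwpos : 0 < ∑ δ ∈ Δ, w δ) :
    (∀ x ∈ convexHull ℝ {δ : EuclideanSpace ℝ (Fin d) | δ ∈ Δ ∧ 0 < w δ},
        logMGFStar Δ w x ≠ ⊤ ∧ logMGFStar Δ w x ≠ ⊥) ∧
      ContinuousOn (logMGFStar Δ w)
        (convexHull ℝ {δ : EuclideanSpace ℝ (Fin d) | δ ∈ Δ ∧ 0 < w δ}) := by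
  classical
  set S : Finset (EuclideanSpace ℝ (Fin d)) := Δ.filter (fun δ => 0 < w δ) with hSdef
  have hsetS : {δ : (EuclideanSpace ℝ (Fin d)) | δ ∈ Δ ∧ 0 < w δ} = (S : Set (EuclideanSpace ℝ (Fin d))) := by
    ext δ; simp [hSdef]
  rw [hsetS]
  obtain ⟨δ₀, hδ₀Δ, hδ₀⟩ : ∃ δ ∈ Δ, 0 < w δ := by
    by_contra hcon
    push_neg at hcon
    have : ∑ δ ∈ Δ, w δ = 0 :=
      Finset.sum_eq_zero fun δ hδ => le_antisymm (hcon δ hδ) (hw δ hδ)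
    linarith
  have hS : S.Nonempty := ⟨δ₀, Finset.mem_filter.mpr ⟨hδ₀Δ, hδ₀⟩⟩
  have hpos : ∀ v : (EuclideanSpace ℝ (Fin d)), 0 < ∑ δ ∈ Δ, w δ * Real.exp ⟪v, δ⟫ := fun v =>
    Finset.sum_pos' (fun δ hδ => mul_nonneg (hw δ hδ) (Real.exp_pos _).le)
      ⟨δ₀, hδ₀Δ, mul_pos hδ₀ (Real.exp_pos _)⟩
  -- lower bound on Φ
  have hΦlb : ∀ (v : (EuclideanSpace ℝ (Fin d))), ∀ δ ∈ S, Real.log (w δ) + ⟪v, δ⟫ ≤ logMGF Δ w v := by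
    intro v δ hδ
    have hδΔ : δ ∈ Δ := (Finset.mem_filter.mp hδ).1
    have hwδ : 0 < w δ := (Finset.mem_filter.mp hδ).2
    have h1 : w δ * Real.exp ⟪v, δ⟫ ≤ ∑ δ' ∈ Δ, w δ' * Real.exp ⟪v, δ'⟫ :=
      Finset.single_le_sum (fun δ' hδ' => mul_nonneg (hw δ' hδ') (Real.exp_pos _).le) hδΔ
    have h2 := Real.log_le_log (mul_pos hwδ (Real.exp_pos _)) h1
    rwa [Real.log_mul hwδ.ne' (Real.exp_pos _).ne', Real.log_exp] at h2
  set M : ℝ := S.sup' hS (fun δ => -Real.log (w δ)) with hM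
  set m : ℝ := -(logMGF Δ w 0) with hm
  -- uniform upper bound
  have hub : ∀ x ∈ convexHull ℝ (S : Set (EuclideanSpace ℝ (Fin d))), ∀ v : (EuclideanSpace ℝ (Fin d)), ⟪v, x⟫ - logMGF Δ w v ≤ M := by
    intro x hx v
    have hcvx : ConvexOn ℝ Set.univ (fun y : (EuclideanSpace ℝ (Fin d)) => ⟪v, y⟫) := by
      refine ⟨convex_univ, ?_⟩
      intro p _ q _ a b _ _ _
      dsimp only
      rw [inner_add_right, real_inner_smul_right, real_inner_smul_right, smul_eq_mul, smul_eq_mul]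
    obtain ⟨δ, hδ, hle⟩ := hcvx.exists_ge_of_mem_convexHull (Set.subset_univ _) hx
    have h2 := hΦlb v δ hδ
    have h3 : -Real.log (w δ) ≤ M := Finset.le_sup' (fun δ => -Real.log (w δ)) hδ
    linarith
  have hbdd : ∀ x ∈ convexHull ℝ (S : Set (EuclideanSpace ℝ (Fin d))),
      BddAbove (Set.range fun v : (EuclideanSpace ℝ (Fin d)) => ⟪v, x⟫ - logMGF Δ w v) := by
    intro x hx
    exact ⟨M, by rintro r ⟨v, rfl⟩; exact hub x hx v⟩
  set g : (EuclideanSpace ℝ (Fin d)) → ℝ := fun x => ⨆ v : (EuclideanSpace ℝ (Fin d)), (⟪v, x⟫ - logMGF Δ w v) with hg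
  have hval0 : ∀ x : (EuclideanSpace ℝ (Fin d)), ⟪(0 : (EuclideanSpace ℝ (Fin d))), x⟫ - logMGF Δ w 0 = m := by
    intro x; rw [hm]; simp
  have hgm : ∀ x ∈ convexHull ℝ (S : Set (EuclideanSpace ℝ (Fin d))), m ≤ g x := by
    intro x hx
    rw [← hval0 x]
    exact le_ciSup (hbdd x hx) 0
  have hgM : ∀ x ∈ convexHull ℝ (S : Set (EuclideanSpace ℝ (Fin d))), g x ≤ M := fun x hx => ciSup_le (hub x hx)
  -- identification of logMGFStar with the real sup
  have hstar : ∀ x ∈ convexHull ℝ (S : Set (EuclideanSpace ℝ (Fin d))), logMGFStar Δ w x = ((g x : ℝ) : EReal) := by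
    intro x hx
    apply le_antisymm
    · exact iSup_le fun v => EReal.coe_le_coe_iff.mpr (le_ciSup (hbdd x hx) v)
    · rw [logMGFStar, le_iSup_iff]
      intro b hb
      induction b with
      | bot => simpa using hb 0
      | coe q =>
          exact EReal.coe_le_coe_iff.mpr
            (ciSup_le fun v => EReal.coe_le_coe_iff.mp (hb v))
      | top => exact le_top
  constructor
  · intro x hx
    rw [hstar x hx]
    exact ⟨EReal.coe_ne_top _, EReal.coe_ne_bot _⟩
  -- continuity of g on the hull
  have hgcont : ContinuousOn g (convexHull ℝ (S : Set (EuclideanSpace ℝ (Fin d)))) := by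
    intro x hx
    rw [ContinuousWithinAt, tendsto_order]
    constructor
    · -- lower semicontinuity
      intro b hb
      obtain ⟨v, hv⟩ := exists_lt_of_lt_ciSup hb
      have hcont : Continuous fun y : (EuclideanSpace ℝ (Fin d)) => ⟪v, y⟫ - logMGF Δ w v :=
        (continuous_const.inner continuous_id).sub continuous_const
      have hopen : IsOpen {y : (EuclideanSpace ℝ (Fin d)) | b < ⟪v, y⟫ - logMGF Δ w v} :=
        isOpen_lt continuous_const hcont
      filter_upwards [mem_nhdsWithin_of_mem_nhds (hopen.mem_nhds hv), self_mem_nhdsWithin]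
        with y h1 h2
      exact lt_of_lt_of_le h1 (le_ciSup (hbdd y h2) v)
    · -- upper semicontinuity via the cone property
      intro b hb
      obtain ⟨r, hr, hcone⟩ := polytope_cone_property S hx
      set K : ℝ := M - m + 1 with hK
      have hmM : m ≤ M := (hgm x hx).trans (hgM x hx)
      have hKpos : 0 < K := by rw [hK]; linarith
      have hbgx : 0 < b - g x := sub_pos.mpr hb
      set ε : ℝ := min r (r * (b - g x) / K) with hε
      have hεpos : 0 < ε := lt_min hr (by positivity)
      filter_upwards [self_mem_nhdsWithin,
        mem_nhdsWithin_of_mem_nhds (Metric.ball_mem_nhds x hεpos)] with y hyP hyb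
      by_cases hyx : y = x
      · subst hyx; exact hb
      · have hnpos : 0 < ‖y - x‖ := norm_pos_iff.mpr (sub_ne_zero.mpr hyx)
        have hnorm : ‖y - x‖ < ε := by
          rw [← dist_eq_norm]; exact Metric.mem_ball.mp hyb
        have hz := hcone y hyP hyx
        set z : (EuclideanSpace ℝ (Fin d)) := x + (r / ‖y - x‖) • (y - x) with hzdef
        set t : ℝ := ‖y - x‖ / r with ht
        have ht0 : 0 < t := div_pos hnpos hr
        have ht1 : t < 1 := (div_lt_one hr).mpr (hnorm.trans_le (min_le_left _ _))
        have hy_comb : y = (1 - t) • x + t • z := by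
          rw [hzdef, smul_add, smul_smul]
          have htr : t * (r / ‖y - x‖) = 1 := by
            rw [ht]; field_simp
          rw [htr, one_smul, sub_smul, one_smul]
          abel
        have hconvineq : g y ≤ (1 - t) * g x + t * g z := by
          conv_lhs => rw [hy_comb]
          apply ciSup_le
          intro v
          have hexp : ⟪v, (1 - t) • x + t • z⟫ - logMGF Δ w v =
              (1 - t) * (⟪v, x⟫ - logMGF Δ w v) + t * (⟪v, z⟫ - logMGF Δ w v) := by
            simp only [inner_add_right, real_inner_smul_right]
            ring
          rw [hexp]
          exact add_le_add
            (mul_le_mul_of_nonneg_left (le_ciSup (hbdd x hx) v) (by linarith))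
            (mul_le_mul_of_nonneg_left (le_ciSup (hbdd z hz) v) ht0.le)
        have hgz : g z ≤ M := hgM z hz
        have hgx : m ≤ g x := hgm x hx
        have hexpand : (1 - t) * g x + t * g z = g x + t * (g z - g x) := by ring
        have h2' : t * (g z - g x) ≤ t * (M - m) :=
          mul_le_mul_of_nonneg_left (by linarith) ht0.le
        have h2'' : t * (M - m) ≤ t * K := mul_le_mul_of_nonneg_left (by rw [hK]; linarith) ht0.le
        have h3 : t * K < b - g x := by
          have hn2 : ‖y - x‖ < r * (b - g x) / K := hnorm.trans_le (min_le_right _ _)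
          have : t < (b - g x) / K := by
            rw [ht, div_lt_div_iff₀ hr hKpos]
            rw [lt_div_iff₀ hKpos] at hn2
            linarith
          exact (lt_div_iff₀ hKpos).mp this
        linarith
  exact (continuous_coe_real_ereal.comp_continuousOn hgcont).congr hstar
end

section
/- (Covering lemma) For every γ ≥ 0, every η > 0 with ρ > 2η, and every φ ∈ E([0,T]), there exists a finite set R ⊆ B̄_{ρ,γ}(φ) of cardinality at most exp(d(n+1)(log(ρ/η) + 2)) such that B̄_{ρ,γ}(φ) ⊆ ⋃_{ψ ∈ R} A_η(ψ); that is, every ψ′ ∈ B̄_{ρ,γ}(φ) satisfies max_{0≤i≤n} |ψ′(t_i) − ψ(t_i)| ≤ 2η for some ψ ∈ R. -/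
open MeasureTheory Metric Module
open scoped ENNReal

lemma packing_bound {E : Type*} [NormedAddCommGroup E] [NormedSpace ℝ E]
    [MeasurableSpace E] [BorelSpace E] [FiniteDimensional ℝ E]
    (μ : Measure E) [μ.IsAddHaarMeasure]
    (c : E) (ρ η : ℝ) (hη : 0 < η) (hρ : 0 < ρ)
    (G : Finset E) (hG : ∀ x ∈ G, dist x c ≤ ρ)
    (hsep : ∀ x ∈ G, ∀ y ∈ G, x ≠ y → 2 * η < dist x y) :
    (G.card : ℝ) ≤ ((ρ + η) / η) ^ (Module.finrank ℝ E) := by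
  set N := Module.finrank ℝ E with hN
  have hdisj : (G : Set E).PairwiseDisjoint (fun x => ball x η) := by
    intro x hx y hy hxy
    refine Set.disjoint_left.2 fun z hzx hzy => ?_
    have h1 : dist x y < 2 * η := by
      calc dist x y ≤ dist x z + dist z y := dist_triangle _ _ _
        _ < η + η := add_lt_add (by simpa [dist_comm] using hzx) hzy
        _ = 2 * η := by ring
    linarith [hsep x hx y hy hxy]
  have hsum : ∑ x ∈ G, μ (ball x η) = μ (⋃ x ∈ G, ball x η) :=
    (measure_biUnion_finset hdisj fun _ _ => measurableSet_ball).symm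
  have hsub : (⋃ x ∈ G, ball x η) ⊆ ball c (ρ + η) := by
    intro z hz
    simp only [Set.mem_iUnion] at hz
    obtain ⟨x, hx, hzx⟩ := hz
    have : dist z c < ρ + η := by
      calc dist z c ≤ dist z x + dist x c := dist_triangle _ _ _
        _ < η + ρ := add_lt_add_of_lt_of_le hzx (hG x hx)
        _ = ρ + η := by ring
    exact this
  have key : (G.card : ℝ≥0∞) * (ENNReal.ofReal (η ^ N) * μ (ball 0 1))
      ≤ ENNReal.ofReal ((ρ + η) ^ N) * μ (ball 0 1) := by
    calc (G.card : ℝ≥0∞) * (ENNReal.ofReal (η ^ N) * μ (ball 0 1))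
        = ∑ _x ∈ G, (ENNReal.ofReal (η ^ N) * μ (ball 0 1)) := by
          simp [Finset.sum_const, nsmul_eq_mul]
      _ = ∑ x ∈ G, μ (ball x η) := by
          refine Finset.sum_congr rfl fun x _ => ?_
          rw [Measure.addHaar_ball_of_pos μ x hη]
      _ = μ (⋃ x ∈ G, ball x η) := hsum
      _ ≤ μ (ball c (ρ + η)) := measure_mono hsub
      _ = _ := Measure.addHaar_ball_of_pos μ c (by positivity)
  have hc0 : μ (ball (0 : E) 1) ≠ 0 := (measure_ball_pos μ 0 one_pos).ne'
  have hct : μ (ball (0 : E) 1) ≠ ⊤ := measure_ball_lt_top.ne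
  rw [← mul_assoc] at key
  have key2 : (G.card : ℝ≥0∞) * ENNReal.ofReal (η ^ N) ≤ ENNReal.ofReal ((ρ + η) ^ N) :=
    (ENNReal.mul_le_mul_iff_left hc0 hct).mp key
  have key3 : (G.card : ℝ) * η ^ N ≤ (ρ + η) ^ N := by
    have := key2
    rw [show ((G.card : ℝ≥0∞)) = ENNReal.ofReal (G.card : ℝ) by simp,
      ← ENNReal.ofReal_mul (by positivity)] at this
    exact (ENNReal.ofReal_le_ofReal_iff (by positivity)).mp this
  rw [div_pow, le_div_iff₀ (by positivity)]
  exact key3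


/-- Covering lemma: For every γ ≥ 0, every η > 0 with ρ > 2η, and every
φ ∈ E([0,T]), there is a finite set R ⊆ B̄_{ρ,γ}(φ) of cardinality at most
exp(d(n+1)(log(ρ/η) + 2)) such that every ψ′ ∈ B̄_{ρ,γ}(φ) is within 2η of some ψ ∈ R
at all partition times t₀,…,t_n.  Here E([0,T]) is the set of continuous paths whose
difference quotients lie in D = conv Δ, and B̄_{ρ,γ}(φ) is the set of ψ ∈ E([0,T])
with sup-distance ≤ ρ from φ whose values stay at distance ≥ γ from ℝ^d ∖ Λ. -/
theorem covering_lemma (d : ℕ) (hd : 1 ≤ d) (T : ℝ) (hT : 0 < T)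
    (Δ : Finset (EuclideanSpace ℝ (Fin d))) (hΔ : Δ.Nonempty)
    (Λ : Set (EuclideanSpace ℝ (Fin d)))
    (n : ℕ) (t : Fin (n + 1) → Set.Icc (0 : ℝ) T)
    (hmono : StrictMono t) (h0 : (t 0 : ℝ) = 0) (hlast : (t (Fin.last n) : ℝ) = T)
    (ρ γ η : ℝ) (hγ : 0 ≤ γ) (hη : 0 < η) (hρη : 2 * η < ρ)
    (φ : C(Set.Icc (0 : ℝ) T, EuclideanSpace ℝ (Fin d)))
    (hφ : ∀ s u : Set.Icc (0 : ℝ) T, s ≠ u →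
      ((s : ℝ) - (u : ℝ))⁻¹ • (φ s - φ u) ∈
        convexHull ℝ (Δ : Set (EuclideanSpace ℝ (Fin d)))) :
    ∃ R : Finset C(Set.Icc (0 : ℝ) T, EuclideanSpace ℝ (Fin d)),
      (∀ ψ ∈ R,
        (∀ s u : Set.Icc (0 : ℝ) T, s ≠ u →
          ((s : ℝ) - (u : ℝ))⁻¹ • (ψ s - ψ u) ∈
            convexHull ℝ (Δ : Set (EuclideanSpace ℝ (Fin d)))) ∧
        (∀ s : Set.Icc (0 : ℝ) T, dist (ψ s) (φ s) ≤ ρ) ∧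
        (∀ s : Set.Icc (0 : ℝ) T, ∀ y ∉ Λ, γ ≤ dist (ψ s) y)) ∧
      ((R.card : ℝ) ≤ Real.exp (d * (n + 1) * (Real.log (ρ / η) + 2))) ∧
      ∀ ψ' : C(Set.Icc (0 : ℝ) T, EuclideanSpace ℝ (Fin d)),
        ((∀ s u : Set.Icc (0 : ℝ) T, s ≠ u →
            ((s : ℝ) - (u : ℝ))⁻¹ • (ψ' s - ψ' u) ∈
              convexHull ℝ (Δ : Set (EuclideanSpace ℝ (Fin d)))) ∧
          (∀ s : Set.Icc (0 : ℝ) T, dist (ψ' s) (φ s) ≤ ρ) ∧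
          (∀ s : Set.Icc (0 : ℝ) T, ∀ y ∉ Λ, γ ≤ dist (ψ' s) y)) →
        ∃ ψ ∈ R, ∀ i : Fin (n + 1), dist (ψ' (t i)) (ψ (t i)) ≤ 2 * η := by
  classical
  let V := (Fin (n + 1) → EuclideanSpace ℝ (Fin d))
  let ev : C(Set.Icc (0 : ℝ) T, EuclideanSpace ℝ (Fin d)) → V := fun ψ i => ψ (t i)
  have hρ : 0 < ρ := by linarith
  let P : C(Set.Icc (0 : ℝ) T, EuclideanSpace ℝ (Fin d)) → Prop := fun ψ =>
    (∀ s u : Set.Icc (0 : ℝ) T, s ≠ u →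
      ((s : ℝ) - (u : ℝ))⁻¹ • (ψ s - ψ u) ∈
        convexHull ℝ (Δ : Set (EuclideanSpace ℝ (Fin d)))) ∧
    (∀ s : Set.Icc (0 : ℝ) T, dist (ψ s) (φ s) ≤ ρ) ∧
    (∀ s : Set.Icc (0 : ℝ) T, ∀ y ∉ Λ, γ ≤ dist (ψ s) y)
  let Sep : Finset C(Set.Icc (0 : ℝ) T, EuclideanSpace ℝ (Fin d)) → Prop := fun F =>
    (∀ ψ ∈ F, P ψ) ∧ ∀ x ∈ F, ∀ y ∈ F, x ≠ y → 2 * η < dist (ev x) (ev y)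
  -- the measure on V
  let μ : Measure V := (Module.finBasis ℝ V).addHaar
  have hNV : (finrank ℝ V : ℝ) = (d : ℝ) * (n + 1) := by
    have : finrank ℝ V = d * (n + 1) := by
      rw [finrank_pi_fintype]
      simp [finrank_euclideanSpace_fin, mul_comm]
    rw [this]; push_cast; ring
  set N := finrank ℝ V with hNdef
  let B : ℝ := ((ρ + η) / η) ^ N
  -- cardinality bound for separated families
  have hcard : ∀ F : Finset C(Set.Icc (0 : ℝ) T, EuclideanSpace ℝ (Fin d)), Sep F → (F.card : ℝ) ≤ B := by
    intro F hF
    have hinj : Set.InjOn ev (F : Set C(Set.Icc (0 : ℝ) T, EuclideanSpace ℝ (Fin d))) := by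
      intro x hx y hy hxy
      by_contra hne
      have := hF.2 x hx y hy hne
      rw [hxy] at this
      simp at this
      linarith
    have hGcard : (F.image ev).card = F.card := Finset.card_image_of_injOn hinj
    have := packing_bound μ (ev φ) ρ η hη hρ (F.image ev)
      (by
        intro x hx
        obtain ⟨a, ha, rfl⟩ := Finset.mem_image.mp hx
        refine (dist_pi_le_iff hρ.le).2 fun i => ?_
        exact (hF.1 a ha).2.1 (t i))
      (by
        intro x hx y hy hxy
        obtain ⟨a, ha, rfl⟩ := Finset.mem_image.mp hx
        obtain ⟨b, hb, rfl⟩ := Finset.mem_image.mp hy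
        exact hF.2 a ha b hb (fun h => hxy (by rw [h])))
    rw [hGcard] at this
    exact this
  -- a separated family of maximal cardinality
  let k : ℕ := ⌈B⌉₊
  let Q : ℕ → Prop := fun m => ∃ F : Finset C(Set.Icc (0 : ℝ) T, EuclideanSpace ℝ (Fin d)), Sep F ∧ F.card = m
  have hQ0 : Q 0 := ⟨∅, ⟨fun ψ h => absurd h (Finset.notMem_empty ψ),
    fun x hx => absurd hx (Finset.notMem_empty x)⟩, rfl⟩
  have hcardk : ∀ F : Finset C(Set.Icc (0 : ℝ) T, EuclideanSpace ℝ (Fin d)), Sep F → F.card ≤ k := by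
    intro F hF
    by_contra h
    push_neg at h
    have h1 : (k : ℝ) < F.card := by exact_mod_cast h
    have h2 : (F.card : ℝ) ≤ B := hcard F hF
    have h3 : B ≤ (k : ℝ) := Nat.le_ceil B
    linarith
  let m : ℕ := Nat.findGreatest Q k
  have hQm : Q m := Nat.findGreatest_spec (Nat.zero_le k) hQ0
  obtain ⟨F, hFsep, hFcard⟩ := hQm
  -- the final exp bound
  have hrpos : 0 < ρ / η := by positivity
  have hexp : B ≤ Real.exp ((d : ℝ) * (n + 1) * (Real.log (ρ / η) + 2)) := by
    have h3 : (3 : ℝ) ≤ Real.exp 2 := by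
      have := Real.add_one_le_exp (2 : ℝ); linarith
    have hr2 : (2 : ℝ) < ρ / η := by
      rw [lt_div_iff₀ hη]; linarith
    have hbase : (ρ + η) / η ≤ Real.exp 2 * (ρ / η) := by
      have h4 : (ρ + η) / η = ρ / η + 1 := by field_simp
      rw [h4]
      nlinarith
    have hmain : B ≤ (Real.exp 2 * (ρ / η)) ^ N :=
      pow_le_pow_left₀ (by positivity) hbase N
    have heq : Real.exp ((d : ℝ) * (n + 1) * (Real.log (ρ / η) + 2))
        = (Real.exp 2 * (ρ / η)) ^ N := by
      rw [← hNV, Real.exp_nat_mul, Real.exp_add, Real.exp_log hrpos, mul_comm]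
    rw [heq]
    exact hmain
  refine ⟨F, ?_, le_trans (hcard F hFsep) hexp, ?_⟩
  · intro ψ h
    exact hFsep.1 ψ h
  intro ψ' hψ'
  by_contra hcon
  push_neg at hcon
  have hcon' : ∀ ψ ∈ F, ∃ i : Fin (n + 1), 2 * η < dist (ψ' (t i)) (ψ (t i)) := hcon
  have hnotmem : ψ' ∉ F := by
    intro h
    obtain ⟨i, hi⟩ := hcon' ψ' h
    simp at hi
    linarith
  have hsep' : Sep (insert ψ' F) := by
    constructor
    · intro ψ h
      rcases Finset.mem_insert.mp h with h | h
      · rw [h]; show P ψ'; exact hψ'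
      · exact hFsep.1 ψ h
    · intro x hx y hy hxy
      rcases Finset.mem_insert.mp hx with hx' | hx' <;>
        rcases Finset.mem_insert.mp hy with hy' | hy'
      · exact absurd (hx'.trans hy'.symm) hxy
      · subst hx'
        obtain ⟨i, hi⟩ := hcon' y hy'
        exact lt_of_lt_of_le hi (dist_le_pi_dist (ev x) (ev y) i)
      · subst hy'
        obtain ⟨i, hi⟩ := hcon' x hx'
        rw [dist_comm]
        exact lt_of_lt_of_le hi (dist_le_pi_dist (ev y) (ev x) i)
      · exact hFsep.2 x hx' y hy' hxy
  have hQm1 : Q (m + 1) :=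
    ⟨insert ψ' F, hsep', by rw [Finset.card_insert_of_notMem hnotmem, hFcard]⟩
  have hle : m + 1 ≤ k := (hFcard ▸ Finset.card_insert_of_notMem hnotmem) ▸
    hcardk (insert ψ' F) hsep'
  exact Nat.findGreatest_is_greatest (Nat.lt_succ_self m) hle hQm1
end

section
/- A continuous path has all its difference quotients in D if and only if it is absolutely continuous with almost-every derivative in D: for a continuous φ : [0,T] → ℝ^d, the condition (φ(t) − φ(t′))/(t − t′) ∈ D for all t ≠ t′ in [0,T] holds if and only if there exists a Lebesgue-integrable g : [0,T] → ℝ^d with φ(t) = φ(0) + ∫₀ᵗ g(s) ds for all t ∈ [0,T] and g(s) ∈ D for Lebesgue-a.e. s ∈ [0,T]. -/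
open MeasureTheory

section Aux

open Set Filter Topology intervalIntegral

variable {E : Type*} [NormedAddCommGroup E] [NormedSpace ℝ E]

theorem bwd_aux {T : ℝ} (hT : 0 < T) {D : Set E} (hconv : Convex ℝ D) (hclosed : IsClosed D)
    [CompleteSpace E]
    {g φ : ℝ → E} (hint : IntegrableOn g (Set.Icc (0:ℝ) T) volume)
    (hrep : ∀ s ∈ Set.Icc (0:ℝ) T, φ s = φ 0 + ∫ r in (0:ℝ)..s, g r)
    (hae : ∀ᵐ s ∂(volume.restrict (Set.Icc (0:ℝ) T)), g s ∈ D) :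
    ∀ s ∈ Set.Icc (0 : ℝ) T, ∀ u ∈ Set.Icc (0 : ℝ) T, s ≠ u →
      (s - u)⁻¹ • (φ s - φ u) ∈ D := by
  have key : ∀ u ∈ Set.Icc (0:ℝ) T, ∀ s ∈ Set.Icc (0:ℝ) T, u < s →
      (s - u)⁻¹ • (φ s - φ u) ∈ D := by
    intro u hu s hs hus
    have hIoc : Set.Ioc u s ⊆ Set.Icc (0:ℝ) T := fun x hx =>
      ⟨hu.1.trans hx.1.le, hx.2.trans hs.2⟩
    have hint' : IntegrableOn g (Set.Ioc u s) volume := hint.mono_set hIoc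
    have hii : ∀ a ∈ Set.Icc (0:ℝ) T, IntervalIntegrable g volume 0 a := by
      intro a ha
      rw [intervalIntegrable_iff]
      refine hint.mono_set (fun x hx => ?_)
      have h := Set.uIoc_subset_uIcc hx
      exact ⟨le_trans (le_min le_rfl ha.1) h.1, le_trans h.2 (max_le hT.le ha.2)⟩
    have hdiff : φ s - φ u = ∫ r in u..s, g r := by
      rw [hrep s hs, hrep u hu]
      have h2 := integral_interval_sub_left (hii s hs) (hii u hu)
      rw [← h2]; abel
    have hvol : volume (Set.Ioc u s) ≠ 0 := by
      rw [Real.volume_Ioc]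
      simp [ENNReal.ofReal_eq_zero, not_le, sub_pos, hus]
    have hvolt : volume (Set.Ioc u s) ≠ ⊤ := by
      rw [Real.volume_Ioc]; exact ENNReal.ofReal_ne_top
    have havg := hconv.set_average_mem hclosed hvol hvolt
      (ae_restrict_of_ae_restrict_of_subset hIoc hae) hint'
    rw [setAverage_eq, measureReal_def, Real.volume_Ioc,
      ENNReal.toReal_ofReal (by linarith : (0:ℝ) ≤ s - u)] at havg
    rw [hdiff, intervalIntegral.integral_of_le hus.le]
    exact havg
  intro s hs u hu hne
  rcases hne.lt_or_gt with h | h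
  · have := key s hs u hu h
    have heq : (s - u)⁻¹ • (φ s - φ u) = (u - s)⁻¹ • (φ u - φ s) := by
      rw [← neg_sub u s, ← neg_sub (φ u) (φ s), inv_neg, neg_smul, smul_neg, neg_neg]
    rw [heq]; exact this
  · exact key u hu s hs h


variable {E : Type*} [NormedAddCommGroup E] [NormedSpace ℝ E]
  [FiniteDimensional ℝ E] [MeasurableSpace E] [BorelSpace E]

theorem fwd_aux {T : ℝ} (hT : 0 < T) {D : Set E} (hclosed : IsClosed D)
    {M : ℝ} (hM0 : 0 ≤ M) (hM : ∀ x ∈ D, ‖x‖ ≤ M) {φ : ℝ → E}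
    (H : ∀ s ∈ Set.Icc (0:ℝ) T, ∀ u ∈ Set.Icc (0:ℝ) T, s ≠ u →
      (s - u)⁻¹ • (φ s - φ u) ∈ D) :
    ∃ g : ℝ → E,
      IntegrableOn g (Set.Icc (0:ℝ) T) volume ∧
      (∀ s ∈ Set.Icc (0:ℝ) T, φ s = φ 0 + ∫ r in (0:ℝ)..s, g r) ∧
      (∀ᵐ s ∂(volume.restrict (Set.Icc (0:ℝ) T)), g s ∈ D) := by
  -- Lipschitz bound on Icc
  have hlip : ∀ s ∈ Set.Icc (0:ℝ) T, ∀ u ∈ Set.Icc (0:ℝ) T,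
      ‖φ s - φ u‖ ≤ M * |s - u| := by
    intro s hs u hu
    rcases eq_or_ne s u with rfl | hne
    · simp
    · have h1 := hM _ (H s hs u hu hne)
      have hsu : s - u ≠ 0 := sub_ne_zero.mpr hne
      rw [norm_smul, norm_inv, Real.norm_eq_abs] at h1
      have habs : 0 < |s - u| := abs_pos.mpr hsu
      calc ‖φ s - φ u‖ = |s - u| * (|s - u|⁻¹ * ‖φ s - φ u‖) := by
            field_simp
        _ ≤ |s - u| * M := mul_le_mul_of_nonneg_left h1 habs.le
        _ = M * |s - u| := mul_comm _ _
  set ψ : ℝ → E := fun t => φ ((Set.projIcc 0 T hT.le t : ℝ)) with hψdef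
  have hproj : ∀ t : ℝ, ((Set.projIcc 0 T hT.le t : ℝ)) ∈ Set.Icc (0:ℝ) T :=
    fun t => (Set.projIcc 0 T hT.le t).2
  have hψeq : ∀ t ∈ Set.Icc (0:ℝ) T, ψ t = φ t := by
    intro t ht
    simp only [hψdef, Set.projIcc_of_mem hT.le ht]
  have hψlipR : ∀ x y : ℝ, ‖ψ x - ψ y‖ ≤ M * |x - y| := by
    intro x y
    have hp := (LipschitzWith.projIcc (a := (0:ℝ)) (b := T) hT.le).dist_le_mul x y
    rw [NNReal.coe_one, one_mul] at hp
    calc ‖ψ x - ψ y‖ ≤ M * |((Set.projIcc 0 T hT.le x : ℝ)) - ((Set.projIcc 0 T hT.le y : ℝ))| :=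
          hlip _ (hproj x) _ (hproj y)
      _ = M * dist (Set.projIcc 0 T hT.le x) (Set.projIcc 0 T hT.le y) := by
          rw [Subtype.dist_eq, Real.dist_eq]
      _ ≤ M * dist x y := mul_le_mul_of_nonneg_left hp hM0
      _ = M * |x - y| := by rw [Real.dist_eq]
  have hψlip : LipschitzWith (Real.toNNReal M) ψ := by
    refine LipschitzWith.of_dist_le_mul fun x y => ?_
    rw [dist_eq_norm, Real.coe_toNNReal M hM0, Real.dist_eq]
    exact hψlipR x y
  have hψc : Continuous ψ := hψlip.continuous
  have hquot : ∀ (x h : ℝ), h ≠ 0 → ‖h⁻¹ • (ψ (x + h) - ψ x)‖ ≤ M := by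
    intro x h hne
    rw [norm_smul, norm_inv, Real.norm_eq_abs]
    have h2 : ‖ψ (x + h) - ψ x‖ ≤ M * |h| := by
      have := hψlipR (x + h) x
      simpa using this
    have habs : 0 < |h| := abs_pos.mpr hne
    calc |h|⁻¹ * ‖ψ (x + h) - ψ x‖ ≤ |h|⁻¹ * (M * |h|) :=
          mul_le_mul_of_nonneg_left h2 (inv_nonneg.mpr habs.le)
      _ = M := by field_simp [mul_comm]
  have hdiff : ∀ᵐ x ∂(volume : Measure ℝ), DifferentiableAt ℝ ψ x :=
    hψlip.ae_differentiableAt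
  set g : ℝ → E := deriv ψ with hgdef
  have hgmeas : StronglyMeasurable g := (measurable_deriv ψ).stronglyMeasurable
  have hgbdd : ∀ x, ‖g x‖ ≤ M := by
    intro x
    by_cases hx : DifferentiableAt ℝ ψ x
    · have ht := hx.hasDerivAt.tendsto_slope_zero
      refine le_of_tendsto ht.norm ?_
      filter_upwards [self_mem_nhdsWithin] with t (ht' : t ≠ 0)
      exact hquot x t ht'
    · simp [hgdef, deriv_zero_of_not_differentiableAt hx, hM0]
  have hgint : IntegrableOn g (Set.Icc (0:ℝ) T) volume := by
    refine Integrable.mono' (g := fun _ => M)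
      (integrableOn_const measure_Icc_lt_top.ne)
      hgmeas.aestronglyMeasurable.restrict (ae_of_all _ hgbdd)
  have hmemD : ∀ᵐ s ∂(volume.restrict (Set.Icc (0:ℝ) T)), g s ∈ D := by
    have h1 : ∀ᵐ s ∂(volume.restrict (Set.Icc (0:ℝ) T)), DifferentiableAt ℝ ψ s :=
      ae_restrict_of_ae hdiff
    have h2 : ∀ᵐ s ∂(volume.restrict (Set.Icc (0:ℝ) T)), s ∈ Set.Ioo (0:ℝ) T := by
      have hnull : volume ({0, T} : Set ℝ) = 0 :=
        (Set.to_countable {0, T}).measure_zero volume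
      rw [ae_restrict_iff' measurableSet_Icc, ae_iff]
      refine measure_mono_null (fun x hx => ?_) hnull
      have hx' : ¬(x ∈ Set.Icc (0:ℝ) T → x ∈ Set.Ioo (0:ℝ) T) := hx
      push_neg at hx'
      obtain ⟨hxI, hxO⟩ := hx'
      simp only [Set.mem_Ioo, not_and_or, not_lt] at hxO
      rcases hxO with h | h
      · left; exact le_antisymm h hxI.1
      · right; exact le_antisymm hxI.2 h
    filter_upwards [h1, h2] with s hds hs
    refine hclosed.mem_of_tendsto hds.hasDerivAt.tendsto_slope_zero ?_
    have hev : ∀ᶠ t in 𝓝[≠] (0:ℝ), s + t ∈ Set.Ioo (0:ℝ) T := by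
      have hcont : ContinuousAt (fun t : ℝ => s + t) 0 :=
        (continuous_const.add continuous_id).continuousAt
      have hmem : Set.Ioo (0:ℝ) T ∈ 𝓝 ((fun t : ℝ => s + t) 0) := by
        simpa using isOpen_Ioo.mem_nhds hs
      exact nhdsWithin_le_nhds (hcont hmem)
    filter_upwards [hev, self_mem_nhdsWithin] with t hmem (htne : t ≠ 0)
    have hm' : s + t ∈ Set.Icc (0:ℝ) T := Set.Ioo_subset_Icc_self hmem
    have hsI : s ∈ Set.Icc (0:ℝ) T := Set.Ioo_subset_Icc_self hs
    have heq : t⁻¹ • (ψ (s + t) - ψ s) = ((s + t) - s)⁻¹ • (φ (s + t) - φ s) := by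
      rw [hψeq _ hm', hψeq _ hsI, add_sub_cancel_left]
    rw [heq]
    exact H (s + t) hm' s hsI (by simpa using htne)
  have hFTC : ∀ t ∈ Set.Icc (0:ℝ) T, ψ t = ψ 0 + ∫ r in (0:ℝ)..t, g r := by
    intro t htI
    set F : ℝ → E := fun u => ∫ x in (0:ℝ)..u, ψ x with hFdef
    have hFd : ∀ u : ℝ, HasDerivAt F (ψ u) u := fun u =>
      intervalIntegral.integral_hasDerivAt_right (hψc.intervalIntegrable _ _)
        (hψc.stronglyMeasurable.stronglyMeasurableAtFilter)
        hψc.continuousAt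
    have lim1 : Tendsto (fun h : ℝ => h⁻¹ • (F (t + h) - F t)) (𝓝[≠] 0) (𝓝 (ψ t)) :=
      (hFd t).tendsto_slope_zero
    have lim2 : Tendsto (fun h : ℝ => h⁻¹ • (F (0 + h) - F 0)) (𝓝[≠] 0) (𝓝 (ψ 0)) :=
      (hFd 0).tendsto_slope_zero
    have isub : ∀ a b : ℝ, IntervalIntegrable ψ volume a b :=
      fun a b => hψc.intervalIntegrable a b
    have limA : Tendsto (fun h : ℝ => ∫ s in (0:ℝ)..t, h⁻¹ • (ψ (s + h) - ψ s)) (𝓝[≠] 0)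
        (𝓝 (ψ t - ψ 0)) := by
      refine Tendsto.congr' ?_ (lim1.sub lim2)
      filter_upwards [self_mem_nhdsWithin] with h (hne : h ≠ 0)
      have e1 : (∫ s in (0:ℝ)..t, ψ (s + h)) = ∫ s in h..(t + h), ψ s := by
        simpa using intervalIntegral.integral_comp_add_right (a := (0:ℝ)) (b := t) ψ h
      have e2 : (∫ s in h..(t + h), ψ s) = F (t + h) - F h :=
        (integral_interval_sub_left (isub 0 (t + h)) (isub 0 h)).symm
      have hF0 : F 0 = 0 := intervalIntegral.integral_same
      have hc1 : Continuous fun s : ℝ => ψ (s + h) := by fun_prop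
      have : (∫ s in (0:ℝ)..t, h⁻¹ • (ψ (s + h) - ψ s))
          = h⁻¹ • ((∫ s in (0:ℝ)..t, ψ (s + h)) - F t) := by
        rw [intervalIntegral.integral_smul,
          intervalIntegral.integral_sub (hc1.intervalIntegrable _ _) (isub 0 t)]
      rw [this, e1, e2, zero_add, hF0, sub_zero, ← smul_sub]
      congr 1
      abel
    have limG : Tendsto (fun h : ℝ => ∫ s in (0:ℝ)..t, h⁻¹ • (ψ (s + h) - ψ s)) (𝓝[≠] 0)
        (𝓝 (∫ r in (0:ℝ)..t, g r)) := by
      apply intervalIntegral.tendsto_integral_filter_of_dominated_convergence (bound := fun _ => M)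
      · refine Eventually.of_forall fun h => ?_
        have hc : Continuous fun s : ℝ => h⁻¹ • (ψ (s + h) - ψ s) := by fun_prop
        exact hc.aestronglyMeasurable.restrict
      · filter_upwards [self_mem_nhdsWithin] with h (hne : h ≠ 0)
        exact ae_of_all _ fun x _ => hquot x h hne
      · exact intervalIntegrable_const
      · filter_upwards [hdiff] with x hx
        exact fun _ => hx.hasDerivAt.tendsto_slope_zero
    have huniq : ψ t - ψ 0 = ∫ r in (0:ℝ)..t, g r := tendsto_nhds_unique limA limG
    rw [← huniq]; abel
  refine ⟨g, hgint, fun s hs => ?_, hmemD⟩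
  rw [← hψeq s hs, ← hψeq 0 (Set.left_mem_Icc.mpr hT.le), hFTC s hs]

end Aux


/-- A continuous path has all its difference quotients in D = conv Δ if
and only if it is absolutely continuous with almost-every derivative in D: for a
continuous φ : [0,T] → ℝ^d, the difference quotient condition holds iff there is a
Lebesgue-integrable g with φ(t) = φ(0) + ∫₀ᵗ g(s) ds on [0,T] and g(s) ∈ D for a.e.
s ∈ [0,T]. -/
theorem difference_quotients_iff_absolutely_continuous
    (d : ℕ) (hd : 1 ≤ d) (T : ℝ) (hT : 0 < T)
    (Δ : Finset (EuclideanSpace ℝ (Fin d))) (hΔ : Δ.Nonempty)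
    (φ : ℝ → EuclideanSpace ℝ (Fin d)) (hφ : ContinuousOn φ (Set.Icc 0 T)) :
    (∀ s ∈ Set.Icc (0 : ℝ) T, ∀ u ∈ Set.Icc (0 : ℝ) T, s ≠ u →
        (s - u)⁻¹ • (φ s - φ u) ∈
          convexHull ℝ (Δ : Set (EuclideanSpace ℝ (Fin d)))) ↔
      ∃ g : ℝ → EuclideanSpace ℝ (Fin d),
        IntegrableOn g (Set.Icc (0 : ℝ) T) volume ∧
        (∀ s ∈ Set.Icc (0 : ℝ) T, φ s = φ 0 + ∫ r in (0 : ℝ)..s, g r) ∧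
        (∀ᵐ s ∂(volume.restrict (Set.Icc (0 : ℝ) T)),
          g s ∈ convexHull ℝ (Δ : Set (EuclideanSpace ℝ (Fin d)))) := by
  constructor
  · intro H
    have hcomp : IsCompact (convexHull ℝ (Δ : Set (EuclideanSpace ℝ (Fin d)))) :=
      Δ.finite_toSet.isCompact_convexHull ℝ
    obtain ⟨M, hM⟩ := hcomp.isBounded.exists_norm_le
    exact fwd_aux hT hcomp.isClosed (le_max_right M 0)
      (fun x hx => (hM x hx).trans (le_max_left _ _)) H
  · rintro ⟨g, hint, hrep, hae⟩
    exact bwd_aux hT (convex_convexHull ℝ _) (Δ.finite_toSet.isCompact_convexHull ℝ).isClosed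
      hint hrep hae
end
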